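/- arXiv:1507.04194 — 6 statements merged into one kernel-verified Lean document; each statement's English description precedes it below -/
import Mathlib

section
/- Let H ∈ (0,1), t > 0, and let g : [0,t] → ℝ be continuous with the symmetry g(s) = g(t−s) for all s ∈ [0,t]. Define F(s) = ∫₀^t g(r) · H|s−r|^{2H−1} sign(s−r) dr. Assume F is absolutely continuous on [0,t], differentiable on (0,t), and g(s) + F′(s) = 1 for all s ∈ (0,t). Then ∫₀^t g(s) ds + 2H ∫₀^t g(τ) τ^{2H−1} dτ = t. -/
open MeasureTheory Real Set intervalIntegral

/-- integrating the Wiener–Hopf equation.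
Let `g` be continuous on `[0,t]` with the symmetry `g(s) = g(t−s)`, and let
`F(s) = ∫₀^t g(r)·H|s−r|^{2H−1} sign(s−r) dr`.  If `F` is absolutely continuous on
`[0,t]` (expressed by the fundamental theorem of calculus representation
`F(s) − F(0) = ∫₀^s F′`), differentiable on `(0,t)`, and `g(s) + F′(s) = 1` on `(0,t)`,
then `∫₀^t g(s) ds + 2H ∫₀^t g(τ) τ^{2H−1} dτ = t`. -/
theorem stmt_1 (H t : ℝ) (hH : H ∈ Set.Ioo (0:ℝ) 1) (ht : 0 < t)
    (g F F' : ℝ → ℝ)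
    (hg_cont : ContinuousOn g (Set.Icc 0 t))
    (hg_sym : ∀ s ∈ Set.Icc (0:ℝ) t, g s = g (t - s))
    (hF : ∀ s, F s = ∫ r in (0:ℝ)..t, g r * (H * |s - r| ^ (2*H - 1) * Real.sign (s - r)))
    (hF'_int : IntervalIntegrable F' volume 0 t)
    (hF_ac : ∀ s ∈ Set.Icc (0:ℝ) t, F s - F 0 = ∫ r in (0:ℝ)..s, F' r)
    (hF_diff : ∀ s ∈ Set.Ioo (0:ℝ) t, HasDerivAt F (F' s) s)
    (heq : ∀ s ∈ Set.Ioo (0:ℝ) t, g s + F' s = 1) :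
    (∫ s in (0:ℝ)..t, g s) + 2*H * ∫ τ in (0:ℝ)..t, g τ * τ ^ (2*H - 1) = t := by
  set I := ∫ τ in (0:ℝ)..t, g τ * τ ^ (2*H - 1) with hI
  have huIoc : Set.uIoc (0:ℝ) t = Set.Ioc 0 t := Set.uIoc_of_le ht.le
  have hne : ∀ᵐ x : ℝ ∂(volume : Measure ℝ), x ≠ t := by
    rw [ae_iff]
    simp
  -- F t = H * I
  have hFt : F t = H * I := by
    rw [hF t]
    have h1 : (∫ r in (0:ℝ)..t, g r * (H * |t - r| ^ (2*H - 1) * Real.sign (t - r)))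
        = ∫ r in (0:ℝ)..t, H * (g (t - r) * (t - r) ^ (2*H - 1)) := by
      apply intervalIntegral.integral_congr_ae
      filter_upwards [hne] with x hx hxI
      rw [huIoc] at hxI
      have hx0 : 0 < x := hxI.1
      have hxt : x < t := lt_of_le_of_ne hxI.2 hx
      have hpos : 0 < t - x := by linarith
      rw [abs_of_pos hpos, Real.sign_of_pos hpos,
        ← hg_sym x ⟨hx0.le, hxt.le⟩]
      ring
    rw [h1, intervalIntegral.integral_comp_sub_left
      (fun x => H * (g x * x ^ (2*H - 1))) t]
    simp only [sub_zero, sub_self]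
    rw [intervalIntegral.integral_const_mul]
  -- F 0 = -(H * I)
  have hF0 : F 0 = -(H * I) := by
    rw [hF 0]
    have h1 : (∫ r in (0:ℝ)..t, g r * (H * |0 - r| ^ (2*H - 1) * Real.sign (0 - r)))
        = ∫ r in (0:ℝ)..t, -(H * (g r * r ^ (2*H - 1))) := by
      apply intervalIntegral.integral_congr_ae
      filter_upwards [hne] with x hx hxI
      rw [huIoc] at hxI
      have hx0 : 0 < x := hxI.1
      have hneg : (0:ℝ) - x < 0 := by linarith
      rw [abs_of_neg hneg, Real.sign_of_neg hneg]
      simp only [neg_sub, sub_zero, zero_sub, neg_neg]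
      ring
    rw [h1, intervalIntegral.integral_neg, intervalIntegral.integral_const_mul]
  -- integrability of g
  have hg_int : IntervalIntegrable g volume 0 t := by
    apply ContinuousOn.intervalIntegrable
    rwa [Set.uIcc_of_le ht.le]
  -- ∫ (g + F') = t
  have hsum : (∫ s in (0:ℝ)..t, (g s + F' s)) = t := by
    have h1 : (∫ s in (0:ℝ)..t, (g s + F' s)) = ∫ s in (0:ℝ)..t, (1:ℝ) := by
      apply intervalIntegral.integral_congr_ae
      filter_upwards [hne] with x hx hxI
      rw [huIoc] at hxI
      exact heq x ⟨hxI.1, lt_of_le_of_ne hxI.2 hx⟩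
    rw [h1]
    simp
  rw [intervalIntegral.integral_add hg_int hF'_int] at hsum
  have hFt0 : F t - F 0 = ∫ r in (0:ℝ)..t, F' r :=
    hF_ac t ⟨ht.le, le_refl t⟩
  rw [hFt, hF0] at hFt0
  have : H * I - -(H * I) = 2 * H * I := by ring
  rw [this] at hFt0
  linarith
end

section
/- Let H ∈ (1/2, 1) and c_H = H(2H−1). There exists a constant a_H > 0 such that the function u₀(x) = a_H · x^{1/2−H}(1−x)^{1/2−H} satisfies c_H ∫₀¹ |x−y|^{2H−2} u₀(y) dy = 1 for every x ∈ (0,1). Equivalently, the value of the integral ∫₀¹ |x−y|^{2H−2} y^{1/2−H}(1−y)^{1/2−H} dy is finite, strictly positive, and does not depend on x ∈ (0,1). -/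
open MeasureTheory Real Set


lemma cont_pp (a b : ℝ) : ContinuousOn (fun t : ℝ => t ^ a * (1 - t) ^ b) (Ioo 0 1) := by
  apply ContinuousOn.mul
  · exact continuousOn_id.rpow_const (fun x hx => Or.inl (ne_of_gt hx.1))
  · exact (continuousOn_const.sub continuousOn_id).rpow_const
      (fun x hx => Or.inl (ne_of_gt (by linarith [hx.2] : (0:ℝ) < 1 - x)))

lemma base_integrable {a b : ℝ} (ha : -1 < a) (hb : -1 < b) :
    IntegrableOn (fun t : ℝ => t ^ a * (1 - t) ^ b) (Ioo 0 1) := by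
  have h1 : IntegrableOn (fun t : ℝ => t ^ a * (1 - t) ^ b) (Ioo 0 (1/2)) := by
    have hint : IntegrableOn (fun t : ℝ => (max ((1/2:ℝ) ^ b) 1) * t ^ a) (Ioo 0 (1/2)) := by
      refine Integrable.const_mul ?_ _
      have := (intervalIntegral.intervalIntegrable_rpow' (a := 0) (b := 1/2) ha)
      rwa [intervalIntegrable_iff_integrableOn_Ioo_of_le (by norm_num)] at this
    refine hint.mono' ((cont_pp a b).mono (fun t ht => ⟨ht.1, by linarith [ht.2]⟩) |>.aestronglyMeasurable measurableSet_Ioo) ?_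
    filter_upwards [ae_restrict_mem measurableSet_Ioo] with t ht
    obtain ⟨ht0, ht1⟩ := ht
    have h1t : (1:ℝ)/2 ≤ 1 - t := by linarith
    have h1t0 : (0:ℝ) < 1 - t := by linarith
    have hbb : (1 - t) ^ b ≤ max ((1/2:ℝ) ^ b) 1 := by
      rcases le_or_gt b 0 with hb0 | hb0
      · exact le_max_of_le_left (rpow_le_rpow_of_nonpos (by norm_num) h1t hb0)
      · exact le_max_of_le_right (rpow_le_one h1t0.le (by linarith) hb0.le)
    have hta : 0 ≤ t ^ a := (rpow_pos_of_pos ht0 a).le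
    rw [Real.norm_eq_abs, abs_of_nonneg (mul_nonneg hta (rpow_pos_of_pos h1t0 b).le)]
    calc t ^ a * (1-t) ^ b ≤ t ^ a * max ((1/2:ℝ) ^ b) 1 := by
          exact mul_le_mul_of_nonneg_left hbb hta
      _ = _ := mul_comm _ _
  have h2 : IntegrableOn (fun t : ℝ => t ^ a * (1 - t) ^ b) (Icc (1/2) 1) := by
    rw [integrableOn_Icc_iff_integrableOn_Ioo]
    have hint : IntegrableOn (fun t : ℝ => (max ((1/2:ℝ) ^ a) 1) * (1-t) ^ b) (Ioo (1/2) 1) := by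
      refine Integrable.const_mul ?_ _
      have := ((intervalIntegral.intervalIntegrable_rpow' (a := 0) (b := 1/2) hb).comp_sub_left 1).symm
      norm_num at this
      rwa [intervalIntegrable_iff_integrableOn_Ioo_of_le (by norm_num)] at this
    refine hint.mono' ((cont_pp a b).mono (fun t ht => ⟨by linarith [ht.1], ht.2⟩) |>.aestronglyMeasurable measurableSet_Ioo) ?_
    filter_upwards [ae_restrict_mem measurableSet_Ioo] with t ht
    obtain ⟨ht0, ht1⟩ := ht
    have ht0' : (0:ℝ) < t := by linarith
    have h1t0 : (0:ℝ) < 1 - t := by linarith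
    have hbb : t ^ a ≤ max ((1/2:ℝ) ^ a) 1 := by
      rcases le_or_gt a 0 with ha0 | ha0
      · exact le_max_of_le_left (rpow_le_rpow_of_nonpos (by norm_num) ht0.le ha0)
      · exact le_max_of_le_right (rpow_le_one ht0'.le ht1.le ha0.le)
    have htb : 0 ≤ (1-t) ^ b := (rpow_pos_of_pos h1t0 b).le
    rw [Real.norm_eq_abs, abs_of_nonneg (mul_nonneg (rpow_pos_of_pos ht0' a).le htb)]
    calc t ^ a * (1-t) ^ b ≤ max ((1/2:ℝ) ^ a) 1 * (1-t) ^ b :=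
          mul_le_mul_of_nonneg_right hbb htb
      _ = _ := rfl
  exact (h1.union h2).mono_set (fun t ht => by
    rcases le_or_gt (1/2 : ℝ) t with h | h
    · exact Or.inr ⟨h, ht.2.le⟩
    · exact Or.inl ⟨ht.1, h⟩)

lemma exp_rpow' (A e : ℝ) : (exp A) ^ e = exp (A * e) := by
  rw [Real.rpow_def_of_pos (exp_pos A), Real.log_exp]

lemma rpow_helper5 {a b s u c H : ℝ} (ha : 0<a) (hb : 0<b) (hs : 0<s) (hu : 0<u) (hc : 0<c) :
    a*b/c^2 * ((a*s*b/c)^(2*H-2) * ((a*u/c)^(1/2-H) * ((b/c)^(1/2-H))))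
    = (a*b)^(H-1/2) * (s^(2*H-2)*u^(1/2-H) * c⁻¹) := by
  obtain ⟨A, rfl⟩ : ∃ A, exp A = a := ⟨log a, exp_log ha⟩
  obtain ⟨B, rfl⟩ : ∃ B, exp B = b := ⟨log b, exp_log hb⟩
  obtain ⟨S, rfl⟩ : ∃ S, exp S = s := ⟨log s, exp_log hs⟩
  obtain ⟨U, rfl⟩ : ∃ U, exp U = u := ⟨log u, exp_log hu⟩
  obtain ⟨C, rfl⟩ : ∃ C, exp C = c := ⟨log c, exp_log hc⟩
  rw [← Real.exp_neg, ← Real.exp_nat_mul]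
  simp only [← Real.exp_add, ← Real.exp_sub]
  simp only [exp_rpow']
  simp only [← Real.exp_add, ← Real.exp_sub]
  rw [Real.exp_eq_exp]
  ring

lemma mul_integrable {a b : ℝ} (ha : -1 < a) (hb : -1 < b) {g : ℝ → ℝ}
    (hg : ContinuousOn g (Ioo 0 1)) {M : ℝ}
    (hM : ∀ t ∈ Ioo (0:ℝ) 1, |g t| ≤ M) :
    IntegrableOn (fun t : ℝ => t ^ a * (1 - t) ^ b * g t) (Ioo 0 1) := by
  have hbase := (base_integrable ha hb).const_mul M
  refine hbase.mono' (((cont_pp a b).mul hg).aestronglyMeasurable measurableSet_Ioo) ?_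
  filter_upwards [ae_restrict_mem measurableSet_Ioo] with t ht
  have h1t : (0:ℝ) < 1 - t := by linarith [ht.2]
  have h1 : 0 ≤ t ^ a * (1-t)^b :=
    mul_nonneg (rpow_pos_of_pos ht.1 a).le (rpow_pos_of_pos h1t b).le
  rw [Real.norm_eq_abs, abs_mul, abs_of_nonneg h1, mul_comm M _]
  exact mul_le_mul_of_nonneg_left (hM t ht) h1

lemma FF_integrand_integrable {H x : ℝ} (hH1 : 1/2 < H) (hH2 : H < 1) (hx1 : x < 1) :
    IntegrableOn (fun t : ℝ => t ^ (2*H-2) * (1-t) ^ (1/2-H) * (1 - x*t)⁻¹) (Ioo 0 1) := by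
  have hden : ∀ t ∈ Ioo (0:ℝ) 1, (0:ℝ) < 1 - x*t := by
    intro t ht
    rcases le_or_gt x 0 with h | h
    · nlinarith [ht.1, ht.2]
    · nlinarith [ht.1, ht.2]
  refine mul_integrable (by linarith) (by linarith)
    (ContinuousOn.inv₀ (continuousOn_const.sub (continuousOn_const.mul continuousOn_id))
      (fun t ht => (hden t ht).ne')) (M := (min (1-x) 1)⁻¹) ?_
  intro t ht
  have h1 := hden t ht
  have hmin : 0 < min (1-x) 1 := lt_min (by linarith) one_pos
  rw [abs_of_pos (inv_pos.mpr h1)]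
  apply inv_anti₀ hmin
  rcases le_or_gt x 0 with h | h
  · exact le_trans (min_le_right _ _) (by nlinarith [ht.1, ht.2])
  · exact le_trans (min_le_left _ _) (by nlinarith [ht.1, ht.2])

lemma DD_integrand_integrable {H x : ℝ} (hH1 : 1/2 < H) (hH2 : H < 1) (hx1 : x < 1) :
    IntegrableOn (fun t : ℝ => t ^ (2*H-1) * (1-t) ^ (1/2-H) * ((1 - x*t)^2)⁻¹) (Ioo 0 1) := by
  have hden : ∀ t ∈ Ioo (0:ℝ) 1, (0:ℝ) < 1 - x*t := by
    intro t ht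
    rcases le_or_gt x 0 with h | h
    · nlinarith [ht.1, ht.2]
    · nlinarith [ht.1, ht.2]
  refine mul_integrable (by linarith) (by linarith)
    (ContinuousOn.inv₀ ((continuousOn_const.sub (continuousOn_const.mul continuousOn_id)).pow 2)
      (fun t ht => pow_ne_zero 2 (hden t ht).ne')) (M := ((min (1-x) 1)^2)⁻¹) ?_
  intro t ht
  have h1 := hden t ht
  have hmin : 0 < min (1-x) 1 := lt_min (by linarith) one_pos
  rw [abs_of_pos (inv_pos.mpr (pow_pos h1 2))]
  apply inv_anti₀ (pow_pos hmin 2)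
  have : min (1-x) 1 ≤ 1 - x*t := by
    rcases le_or_gt x 0 with h | h
    · exact le_trans (min_le_right _ _) (by nlinarith [ht.1, ht.2])
    · exact le_trans (min_le_left _ _) (by nlinarith [ht.1, ht.2])
  nlinarith [hmin]

lemma BB_integrand_integrable {H : ℝ} (hH1 : 1/2 < H) (hH2 : H < 1) :
    IntegrableOn (fun t : ℝ => t ^ (2*H-2) * (1-t) ^ (1/2-H)) (Ioo 0 1) :=
  base_integrable (by linarith) (by linarith)

noncomputable def FF (H x : ℝ) : ℝ :=
  ∫ t in Ioo (0:ℝ) 1, t ^ (2*H-2) * (1-t) ^ (1/2-H) * (1 - x*t)⁻¹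

noncomputable def DD (H x : ℝ) : ℝ :=
  ∫ t in Ioo (0:ℝ) 1, t ^ (2*H-1) * (1-t) ^ (1/2-H) * ((1 - x*t)^2)⁻¹

noncomputable def BB (H : ℝ) : ℝ :=
  ∫ t in Ioo (0:ℝ) 1, t ^ (2*H-2) * (1-t) ^ (1/2-H)

lemma partA {H : ℝ} (hH1 : 1/2 < H) (hH2 : H < 1) {x : ℝ} (hx : x ∈ Ioo (0:ℝ) 1) :
    IntegrableOn (fun y => |x - y| ^ (2*H - 2) * (y ^ (1/2 - H) * (1 - y) ^ (1/2 - H))) (Ioo 0 x)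
    ∧ ∫ y in Ioo 0 x, |x - y| ^ (2*H - 2) * (y ^ (1/2 - H) * (1 - y) ^ (1/2 - H))
      = (x*(1-x)) ^ (H - 1/2) * FF H x := by
  obtain ⟨hx0, hx1⟩ := hx
  have h1x : (0:ℝ) < 1 - x := by linarith
  set g : ℝ → ℝ := fun y => |x - y| ^ (2*H - 2) * (y ^ (1/2 - H) * (1 - y) ^ (1/2 - H)) with hg
  set φ : ℝ → ℝ := fun t => x*(1-t) / (1-x*t) with hφ
  set φ' : ℝ → ℝ := fun t => -(x*(1-x)) / (1-x*t)^2 with hφ'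
  have hden : ∀ t ∈ Ioo (0:ℝ) 1, (0:ℝ) < 1 - x*t := by
    intro t ht; nlinarith [ht.1, ht.2]
  -- derivative
  have hder : ∀ t ∈ Ioo (0:ℝ) 1, HasDerivWithinAt φ (φ' t) (Ioo 0 1) t := by
    intro t ht
    have hne := (hden t ht).ne'
    have hnum : HasDerivAt (fun t : ℝ => x*(1-t)) (x * (0-1)) t :=
      ((hasDerivAt_const t (1:ℝ)).sub (hasDerivAt_id t)).const_mul x
    have hdenom : HasDerivAt (fun t : ℝ => 1-x*t) (0 - x*1) t :=
      (hasDerivAt_const t (1:ℝ)).sub ((hasDerivAt_id t).const_mul x)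
    have := hnum.div hdenom hne
    refine HasDerivAt.hasDerivWithinAt ?_
    refine this.congr_deriv ?_
    symm
    show -(x*(1-x)) / (1-x*t)^2 = _
    rw [div_eq_div_iff (pow_ne_zero 2 hne) (pow_ne_zero 2 hne)]
    ring
  -- injectivity
  have hinj : InjOn φ (Ioo 0 1) := by
    intro t1 h1 t2 h2 heq
    have e1 := (hden t1 h1).ne'
    have e2 := (hden t2 h2).ne'
    rw [hφ] at heq
    simp only at heq
    rw [div_eq_div_iff e1 e2] at heq
    have key : x*(1-x)*(t2-t1) = 0 := by linear_combination heq
    rcases mul_eq_zero.mp key with h | h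
    · exact absurd h (mul_ne_zero hx0.ne' h1x.ne')
    · linarith [sub_eq_zero.mp h]
  -- image
  have himg : φ '' (Ioo 0 1) = Ioo 0 x := by
    apply Subset.antisymm
    · rintro y ⟨t, ht, rfl⟩
      have h1 := hden t ht
      constructor
      · exact div_pos (mul_pos hx0 (by linarith [ht.2])) h1
      · rw [div_lt_iff₀ h1]
        nlinarith [mul_pos (mul_pos hx0 ht.1) h1x]
    · rintro y ⟨hy0, hyx⟩
      have hy1 : (0:ℝ) < 1 - y := by linarith
      refine ⟨(x-y)/(x*(1-y)), ⟨?_, ?_⟩, ?_⟩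
      · exact div_pos (by linarith) (mul_pos hx0 hy1)
      · rw [div_lt_one (mul_pos hx0 hy1)]
        nlinarith
      · have e1 : 1 - x*((x-y)/(x*(1-y))) = (1-x)/(1-y) := by
          field_simp
          ring
        have e2 : x*(1 - (x-y)/(x*(1-y))) = y*(1-x)/(1-y) := by
          field_simp
          ring
        show x*(1 - (x-y)/(x*(1-y))) / (1 - x*((x-y)/(x*(1-y)))) = y
        rw [e1, e2]
        rw [div_div_div_eq]
        field_simp
  -- pointwise identity
  have hpt : ∀ t ∈ Ioo (0:ℝ) 1,
      |φ' t| • g (φ t)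
      = (x*(1-x)) ^ (H - 1/2) * (t ^ (2*H-2) * (1-t) ^ (1/2-H) * (1 - x*t)⁻¹) := by
    intro t ht
    obtain ⟨ht0, ht1⟩ := ht
    have h1t : (0:ℝ) < 1 - t := by linarith
    have hc : (0:ℝ) < 1 - x*t := hden t ⟨ht0, ht1⟩
    have habs : |φ' t| = x*(1-x)/(1-x*t)^2 := by
      rw [hφ']
      simp only
      rw [abs_div, abs_neg, abs_of_pos (mul_pos hx0 h1x), abs_of_pos (pow_pos hc 2)]
    have hsub : x - φ t = x*t*(1-x)/(1-x*t) := by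
      rw [hφ]; field_simp; ring
    have hone : 1 - φ t = (1-x)/(1-x*t) := by
      rw [hφ]; field_simp; ring
    rw [smul_eq_mul, habs, hg]
    simp only
    rw [hsub, hone]
    have hφt : φ t = x*(1-t)/(1-x*t) := rfl
    rw [hφt, abs_of_pos (by positivity : (0:ℝ) < x*t*(1-x)/(1-x*t))]
    exact rpow_helper5 hx0 h1x ht0 h1t hc
  have hRint : IntegrableOn (fun t => |φ' t| • g (φ t)) (Ioo 0 1) := by
    have h2 : IntegrableOn
        (fun t => (x*(1-x)) ^ (H - 1/2) * (t ^ (2*H-2) * (1-t) ^ (1/2-H) * (1 - x*t)⁻¹))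
        (Ioo 0 1) := (FF_integrand_integrable hH1 hH2 hx1).const_mul _
    exact IntegrableOn.congr_fun h2 (fun t ht => (hpt t ht).symm) measurableSet_Ioo
  constructor
  · rw [← himg]
    rw [integrableOn_image_iff_integrableOn_abs_deriv_smul measurableSet_Ioo hder hinj]
    exact hRint
  · rw [← himg, integral_image_eq_integral_abs_deriv_smul measurableSet_Ioo hder hinj,
      setIntegral_congr_fun measurableSet_Ioo hpt]
    rw [MeasureTheory.integral_const_mul]
    rfl

lemma ker_reflect (H x : ℝ) (y : ℝ) :
    |x - (1-y)| ^ (2*H - 2) * ((1-y) ^ (1/2 - H) * (1 - (1-y)) ^ (1/2 - H))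
    = |(1-x) - y| ^ (2*H - 2) * (y ^ (1/2 - H) * (1 - y) ^ (1/2 - H)) := by
  have h1 : x - (1-y) = -((1-x) - y) := by ring
  have h2 : 1 - (1-y) = y := by ring
  rw [h1, abs_neg, h2]
  ring

lemma partB {H : ℝ} (hH1 : 1/2 < H) (hH2 : H < 1) {x : ℝ} (hx : x ∈ Ioo (0:ℝ) 1) :
    IntegrableOn (fun y => |x - y| ^ (2*H - 2) * (y ^ (1/2 - H) * (1 - y) ^ (1/2 - H))) (Ioo x 1)
    ∧ ∫ y in Ioo x 1, |x - y| ^ (2*H - 2) * (y ^ (1/2 - H) * (1 - y) ^ (1/2 - H))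
      = (x*(1-x)) ^ (H - 1/2) * FF H (1-x) := by
  obtain ⟨hx0, hx1⟩ := hx
  have hx' : (1-x) ∈ Ioo (0:ℝ) 1 := ⟨by linarith, by linarith⟩
  have hA := partA hH1 hH2 hx'
  set g : ℝ → ℝ := fun y => |x - y| ^ (2*H - 2) * (y ^ (1/2 - H) * (1 - y) ^ (1/2 - H)) with hgdef
  set g' : ℝ → ℝ := fun y => |(1-x) - y| ^ (2*H - 2) * (y ^ (1/2 - H) * (1 - y) ^ (1/2 - H)) with hg'def
  have hder : ∀ y ∈ Ioo (0:ℝ) (1-x), HasDerivWithinAt (fun y : ℝ => 1 - y) (-1 : ℝ) (Ioo 0 (1-x)) y :=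
    fun y _ => ((hasDerivAt_const y (1:ℝ)).sub (hasDerivAt_id y)).hasDerivWithinAt.congr_deriv (by norm_num)
  have hinj : InjOn (fun y : ℝ => 1 - y) (Ioo 0 (1-x)) := fun a _ b _ h => by
    simp only at h; linarith
  have himg : (fun y : ℝ => 1 - y) '' (Ioo 0 (1-x)) = Ioo x 1 := by
    rw [Set.image_const_sub_Ioo]
    norm_num
  have hpt : ∀ y ∈ Ioo (0:ℝ) (1-x), |(-1 : ℝ)| • g (1 - y) = g' y := by
    intro y _
    rw [smul_eq_mul, abs_neg, abs_one, one_mul, hgdef, hg'def]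
    simp only
    exact ker_reflect H x y
  constructor
  · rw [← himg, integrableOn_image_iff_integrableOn_abs_deriv_smul measurableSet_Ioo hder hinj]
    exact IntegrableOn.congr_fun (hA.1.congr_fun (fun y hy => rfl) measurableSet_Ioo)
      (fun y hy => (hpt y hy).symm) measurableSet_Ioo
  · rw [← himg, integral_image_eq_integral_abs_deriv_smul measurableSet_Ioo hder hinj,
      setIntegral_congr_fun measurableSet_Ioo hpt]
    have := hA.2
    rw [show (1-x)*(1-(1-x)) = x*(1-x) by ring] at this
    exact this

lemma Isplit {H : ℝ} (hH1 : 1/2 < H) (hH2 : H < 1) {x : ℝ} (hx : x ∈ Ioo (0:ℝ) 1) :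
    IntegrableOn (fun y => |x - y| ^ (2*H - 2) * (y ^ (1/2 - H) * (1 - y) ^ (1/2 - H))) (Ioo 0 1)
    ∧ ∫ y in Ioo (0:ℝ) 1, |x - y| ^ (2*H - 2) * (y ^ (1/2 - H) * (1 - y) ^ (1/2 - H))
      = (x*(1-x)) ^ (H - 1/2) * (FF H x + FF H (1-x)) := by
  obtain ⟨hA, hAval⟩ := partA hH1 hH2 hx
  obtain ⟨hB, hBval⟩ := partB hH1 hH2 hx
  set g : ℝ → ℝ := fun y => |x - y| ^ (2*H - 2) * (y ^ (1/2 - H) * (1 - y) ^ (1/2 - H)) with hgdef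
  have hB' : IntegrableOn g (Ico x 1) := by
    rw [integrableOn_Ico_iff_integrableOn_Ioo]
    exact hB
  have hunion : Ioo (0:ℝ) x ∪ Ico x 1 = Ioo 0 1 := by
    ext y
    simp only [mem_union, mem_Ioo, mem_Ico]
    constructor
    · rintro (⟨h1, h2⟩ | ⟨h1, h2⟩)
      · exact ⟨h1, lt_trans h2 hx.2⟩
      · exact ⟨lt_of_lt_of_le hx.1 h1, h2⟩
    · rintro ⟨h1, h2⟩
      rcases lt_or_ge y x with h | h
      · exact Or.inl ⟨h1, h⟩
      · exact Or.inr ⟨h, h2⟩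
  have hdisj : Disjoint (Ioo (0:ℝ) x) (Ico x 1) :=
    Set.disjoint_left.mpr (fun y hy hy' => absurd hy.2 (not_lt.mpr hy'.1))
  constructor
  · rw [← hunion]
    exact hA.union hB'
  · rw [← hunion, setIntegral_union hdisj measurableSet_Ico hA hB',
      MeasureTheory.integral_Ico_eq_integral_Ioo, hAval, hBval]
    ring

lemma FF_hasDeriv {H : ℝ} (hH1 : 1/2 < H) (hH2 : H < 1) {x : ℝ} (hx : x ∈ Ioo (0:ℝ) 1) :
    HasDerivAt (FF H) (DD H x) x := by
  obtain ⟨hx0, hx1⟩ := hx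
  set r : ℝ := (1+x)/2 with hr
  have hr1 : r < 1 := by rw [hr]; linarith
  have hrx : x < r := by rw [hr]; linarith
  set ε : ℝ := (1-x)/2 with hε
  have hεpos : 0 < ε := by rw [hε]; linarith
  have hm : (0:ℝ) < min (1-r) 1 := lt_min (by linarith) one_pos
  have hlow : ∀ x' : ℝ, x' < r → ∀ t ∈ Ioo (0:ℝ) 1, min (1-r) 1 ≤ 1 - x'*t := by
    intro x' hx' t ht
    rcases le_or_gt x' 0 with h | h
    · have : x'*t ≤ 0 := mul_nonpos_of_nonpos_of_nonneg h ht.1.le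
      exact le_trans (min_le_right _ _) (by linarith)
    · have : x'*t < r := by nlinarith [ht.1, ht.2]
      exact le_trans (min_le_left _ _) (by linarith)
  have key := hasDerivAt_integral_of_dominated_loc_of_deriv_le (μ := volume.restrict (Ioo (0:ℝ) 1))
    (F := fun x' t => t ^ (2*H-2) * (1-t) ^ (1/2-H) * (1 - x'*t)⁻¹)
    (F' := fun x' t => t ^ (2*H-1) * (1-t) ^ (1/2-H) * ((1 - x'*t)^2)⁻¹)
    (x₀ := x)
    (bound := fun t => t ^ (2*H-1) * (1-t) ^ (1/2-H) * (((min (1-r) 1)^2)⁻¹))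
    (Metric.ball_mem_nhds x hεpos) ?_ (FF_integrand_integrable hH1 hH2 hx1) ?_ ?_ ?_ ?_
  · exact key.2
  · filter_upwards [isOpen_Iio.eventually_mem (show x ∈ Iio (1:ℝ) from hx1)] with x' hx'
    exact (FF_integrand_integrable hH1 hH2 hx').aestronglyMeasurable
  · exact (DD_integrand_integrable hH1 hH2 hx1).aestronglyMeasurable
  · filter_upwards [ae_restrict_mem measurableSet_Ioo] with t ht
    intro x' hx'
    have hx'r : x' < r := by
      have := mem_ball_iff_norm.mp hx'
      rw [Real.norm_eq_abs, abs_sub_lt_iff] at this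
      rw [hr]; linarith [this.1]
    have h1 := hlow x' hx'r t ht
    have h1t : (0:ℝ) < 1 - t := by linarith [ht.2]
    have hpos : (0:ℝ) < 1 - x'*t := lt_of_lt_of_le hm h1
    rw [Real.norm_eq_abs, abs_of_nonneg (mul_nonneg (mul_nonneg (rpow_pos_of_pos ht.1 _).le
      (rpow_pos_of_pos h1t _).le) (inv_nonneg.mpr (sq_nonneg _)))]
    have hinv : ((1 - x'*t)^2)⁻¹ ≤ (((min (1-r) 1)^2)⁻¹) := by
      apply inv_anti₀ (by positivity)
      nlinarith [hm]
    have hnn : (0:ℝ) ≤ t ^ (2*H-1) * (1-t) ^ (1/2-H) :=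
      mul_nonneg (rpow_pos_of_pos ht.1 _).le (rpow_pos_of_pos h1t _).le
    exact mul_le_mul_of_nonneg_left hinv hnn
  · exact (base_integrable (by linarith : (-1:ℝ) < 2*H-1) (by linarith)).mul_const _
  · filter_upwards [ae_restrict_mem measurableSet_Ioo] with t ht
    intro x' hx'
    have hx'r : x' < r := by
      have := mem_ball_iff_norm.mp hx'
      rw [Real.norm_eq_abs, abs_sub_lt_iff] at this
      rw [hr]; linarith [this.1]
    have hpos : (0:ℝ) < 1 - x'*t := lt_of_lt_of_le hm (hlow x' hx'r t ht)
    have hda : HasDerivAt (fun y : ℝ => 1 - y*t) (-t) x' := by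
      simpa using ((hasDerivAt_id x').mul_const t).const_sub 1
    have hinv := hda.inv hpos.ne'
    have hfull := hinv.const_mul (t ^ (2*H-2) * (1-t) ^ (1/2-H))
    refine hfull.congr_deriv ?_
    symm
    rw [show 2*H-1 = (2*H-2)+1 by ring, Real.rpow_add_one ht.1.ne']
    field_simp

lemma ODE {H : ℝ} (hH1 : 1/2 < H) (hH2 : H < 1) {x : ℝ} (hx : x ∈ Ioo (0:ℝ) 1) :
    x*(1-x) * DD H x = (H - 1/2) * (BB H + (2*x-1) * FF H x) := by
  obtain ⟨hx0, hx1⟩ := hx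
  have h1x : (0:ℝ) < 1 - x := by linarith
  set ψ : ℝ → ℝ := fun t => t ^ (2*H-1) * (1-t) ^ (3/2-H) * (1-x*t)⁻¹ with hψ
  set combo : ℝ → ℝ := fun t =>
    (H-1/2) * (t ^ (2*H-2) * (1-t) ^ (1/2-H))
    + (((H-1/2)-(2*H-1)*(1-x)) * (t ^ (2*H-2) * (1-t) ^ (1/2-H) * (1 - x*t)⁻¹)
      + (-(x*(1-x))) * (t ^ (2*H-1) * (1-t) ^ (1/2-H) * ((1 - x*t)^2)⁻¹)) with hcombo
  set ψd : ℝ → ℝ := fun t => x⁻¹ * combo t with hψd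
  have hdenIcc : ∀ t ∈ Icc (0:ℝ) 1, (0:ℝ) < 1 - x*t := by
    intro t ht
    nlinarith [ht.1, ht.2]
  have hcomboInt : IntegrableOn combo (Ioo 0 1) :=
    ((BB_integrand_integrable hH1 hH2).const_mul _).add
      (((FF_integrand_integrable hH1 hH2 hx1).const_mul _).add
        ((DD_integrand_integrable hH1 hH2 hx1).const_mul _))
  have hψdInt : IntegrableOn ψd (Ioo 0 1) := hcomboInt.const_mul _
  have hcont : ContinuousOn ψ (Icc 0 1) := by
    apply ContinuousOn.mul
    apply ContinuousOn.mul
    · exact continuousOn_id.rpow_const (fun t _ => Or.inr (by linarith))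
    · exact (continuousOn_const.sub continuousOn_id).rpow_const (fun t _ => Or.inr (by linarith))
    · exact ContinuousOn.inv₀ (continuousOn_const.sub (continuousOn_const.mul continuousOn_id))
        (fun t ht => (hdenIcc t ht).ne')
  have hderiv : ∀ t ∈ Ioo (0:ℝ) 1, HasDerivAt ψ (ψd t) t := by
    intro t ht
    have ht0 := ht.1
    have h1t : (0:ℝ) < 1 - t := by linarith [ht.2]
    have hc : (0:ℝ) < 1 - x*t := hdenIcc t ⟨ht.1.le, ht.2.le⟩
    have h1 : HasDerivAt (fun t : ℝ => t ^ (2*H-1)) ((2*H-1)*t^(2*H-1-1)) t :=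
      Real.hasDerivAt_rpow_const (Or.inl ht0.ne')
    have hbase : HasDerivAt (fun t : ℝ => 1 - t) (-1) t := by
      simpa using (hasDerivAt_id t).const_sub 1
    have h2 : HasDerivAt (fun t : ℝ => (1-t) ^ (3/2-H)) ((-1) * (3/2-H) * (1-t)^(3/2-H-1)) t :=
      hbase.rpow_const (Or.inl h1t.ne')
    have hd : HasDerivAt (fun t : ℝ => 1 - x*t) (-(x*1)) t := by
      simpa using ((hasDerivAt_id t).const_mul x).const_sub 1
    have h3 := hd.inv hc.ne'
    have full := (h1.mul h2).mul h3
    refine full.congr_deriv ?_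
    symm
    rw [hψd, hcombo]
    simp only [Pi.mul_apply, Pi.inv_apply]
    rw [show (2*H-1-1 : ℝ) = 2*H-2 from by ring, show (3/2-H-1 : ℝ) = 1/2-H from by ring,
      show (2*H-1 : ℝ) = (2*H-2)+1 from by ring, Real.rpow_add_one ht0.ne',
      show (3/2-H : ℝ) = (1/2-H)+1 from by ring, Real.rpow_add_one h1t.ne']
    field_simp
    ring
  have hψ0 : ψ 0 = 0 := by
    rw [hψ]
    simp only
    rw [Real.zero_rpow (by linarith : (0:ℝ) < 2*H-1).ne']
    ring
  have hψ1 : ψ 1 = 0 := by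
    rw [hψ]
    simp only
    rw [show (1:ℝ) - 1 = 0 from by ring, Real.zero_rpow (by linarith : (0:ℝ) < 3/2-H).ne']
    ring
  have hFTC : ∫ t in (0:ℝ)..1, ψd t = ψ 1 - ψ 0 := by
    apply intervalIntegral.integral_eq_sub_of_hasDeriv_right_of_le zero_le_one hcont
      (fun t ht => (hderiv t ht).hasDerivWithinAt)
    rw [intervalIntegrable_iff_integrableOn_Ioo_of_le zero_le_one]
    exact hψdInt
  have hzero : ∫ t in Ioo (0:ℝ) 1, ψd t = 0 := by
    rw [← MeasureTheory.integral_Ioc_eq_integral_Ioo, ← intervalIntegral.integral_of_le zero_le_one,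
      hFTC, hψ0, hψ1, sub_zero]
  have hcombozero : ∫ t in Ioo (0:ℝ) 1, combo t = 0 := by
    have hrw : ∀ t, combo t = x * ψd t := fun t => (mul_inv_cancel_left₀ hx0.ne' _).symm
    calc ∫ t in Ioo (0:ℝ) 1, combo t = ∫ t in Ioo (0:ℝ) 1, x * ψd t := by
          simp only [hrw]
      _ = x * ∫ t in Ioo (0:ℝ) 1, ψd t := MeasureTheory.integral_const_mul x _
      _ = 0 := by rw [hzero, mul_zero]
  have hexpand : ∫ t in Ioo (0:ℝ) 1, combo t
      = (H-1/2) * BB H + (((H-1/2)-(2*H-1)*(1-x)) * FF H x + (-(x*(1-x))) * DD H x) := by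
    have hI1 : IntegrableOn (fun t : ℝ => (H-1/2) * (t ^ (2*H-2) * (1-t) ^ (1/2-H))) (Ioo 0 1) :=
      (BB_integrand_integrable hH1 hH2).const_mul _
    have hI2 : IntegrableOn (fun t : ℝ =>
        ((H-1/2)-(2*H-1)*(1-x)) * (t ^ (2*H-2) * (1-t) ^ (1/2-H) * (1 - x*t)⁻¹)) (Ioo 0 1) :=
      (FF_integrand_integrable hH1 hH2 hx1).const_mul _
    have hI3 : IntegrableOn (fun t : ℝ =>
        (-(x*(1-x))) * (t ^ (2*H-1) * (1-t) ^ (1/2-H) * ((1 - x*t)^2)⁻¹)) (Ioo 0 1) :=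
      (DD_integrand_integrable hH1 hH2 hx1).const_mul _
    have hI23 : IntegrableOn (fun t : ℝ =>
        ((H-1/2)-(2*H-1)*(1-x)) * (t ^ (2*H-2) * (1-t) ^ (1/2-H) * (1 - x*t)⁻¹)
        + (-(x*(1-x))) * (t ^ (2*H-1) * (1-t) ^ (1/2-H) * ((1 - x*t)^2)⁻¹)) (Ioo 0 1) :=
      hI2.add hI3
    rw [hcombo]
    rw [MeasureTheory.integral_add hI1 hI23, MeasureTheory.integral_add hI2 hI3,
      MeasureTheory.integral_const_mul, MeasureTheory.integral_const_mul,
      MeasureTheory.integral_const_mul]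
    rfl
  rw [hexpand] at hcombozero
  linear_combination (-1 : ℝ) * hcombozero

lemma Gder {H : ℝ} (hH1 : 1/2 < H) (hH2 : H < 1) {x : ℝ} (hx : x ∈ Ioo (0:ℝ) 1) :
    HasDerivAt (fun z => (z*(1-z)) ^ (H - 1/2) * (FF H z + FF H (1-z))) 0 x := by
  obtain ⟨hx0, hx1⟩ := hx
  have h1x : (0:ℝ) < 1 - x := by linarith
  have hmne : (x*(1-x)) ≠ 0 := (mul_pos hx0 h1x).ne'
  have hm : HasDerivAt (fun z : ℝ => z*(1-z)) (1*(1-x) + x*(-1)) x :=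
    (hasDerivAt_id x).mul ((hasDerivAt_id x).const_sub 1)
  have hmp := hm.rpow_const (p := H - 1/2) (Or.inl hmne)
  have hF1 := FF_hasDeriv hH1 hH2 ⟨hx0, hx1⟩
  have hF2 : HasDerivAt (fun z : ℝ => FF H (1-z)) (DD H (1-x) * (-1)) x := by
    have := (FF_hasDeriv hH1 hH2 (⟨by linarith, by linarith⟩ : (1-x) ∈ Ioo (0:ℝ) 1)).comp x
      ((hasDerivAt_id x).const_sub 1)
    exact this
  have htotal := hmp.mul (hF1.add hF2)
  have key : (x*(1-x)) ^ (H-1/2-1) * (x*(1-x)) = (x*(1-x)) ^ (H - 1/2) := by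
    rw [← Real.rpow_add_one hmne (H-1/2-1)]
    congr 1
    ring
  have hODE1 := ODE hH1 hH2 (⟨hx0, hx1⟩ : x ∈ Ioo (0:ℝ) 1)
  have hODE2 := ODE hH1 hH2 (⟨by linarith, by linarith⟩ : (1-x) ∈ Ioo (0:ℝ) 1)
  refine htotal.congr_deriv ?_
  symm
  simp only [Pi.add_apply]
  linear_combination (DD H x - DD H (1-x)) * key
    - (x*(1-x)) ^ (H-1/2-1) * hODE1 + (x*(1-x)) ^ (H-1/2-1) * hODE2

lemma Gconst {H : ℝ} (hH1 : 1/2 < H) (hH2 : H < 1) {x₁ x₂ : ℝ}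
    (h1 : x₁ ∈ Ioo (0:ℝ) 1) (h2 : x₂ ∈ Ioo (0:ℝ) 1) :
    (x₁*(1-x₁)) ^ (H - 1/2) * (FF H x₁ + FF H (1-x₁))
    = (x₂*(1-x₂)) ^ (H - 1/2) * (FF H x₂ + FF H (1-x₂)) := by
  have hsub : uIcc x₁ x₂ ⊆ Ioo (0:ℝ) 1 := by
    intro y hy
    rw [Set.mem_uIcc] at hy
    rcases hy with ⟨ha, hb⟩ | ⟨ha, hb⟩
    · exact ⟨lt_of_lt_of_le h1.1 ha, lt_of_le_of_lt hb h2.2⟩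
    · exact ⟨lt_of_lt_of_le h2.1 ha, lt_of_le_of_lt hb h1.2⟩
  have := intervalIntegral.integral_eq_sub_of_hasDerivAt
    (f := fun z => (z*(1-z)) ^ (H - 1/2) * (FF H z + FF H (1-z))) (f' := fun _ => (0:ℝ))
    (a := x₁) (b := x₂) (fun y hy => Gder hH1 hH2 (hsub hy)) intervalIntegrable_const
  simp only [intervalIntegral.integral_const, smul_zero, smul_eq_mul, mul_zero] at this
  linarith [this]

lemma FF_pos {H : ℝ} (hH1 : 1/2 < H) (hH2 : H < 1) {x : ℝ} (hx1 : x < 1) :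
    0 < FF H x := by
  have hint := FF_integrand_integrable hH1 hH2 hx1
  have hden : ∀ t ∈ Ioo (0:ℝ) 1, (0:ℝ) < 1 - x*t := by
    intro t ht
    rcases le_or_gt x 0 with h | h
    · nlinarith [ht.1, ht.2]
    · nlinarith [ht.1, ht.2]
  have hnn : 0 ≤ᵐ[volume.restrict (Ioo (0:ℝ) 1)]
      (fun t : ℝ => t ^ (2*H-2) * (1-t) ^ (1/2-H) * (1 - x*t)⁻¹) := by
    filter_upwards [ae_restrict_mem measurableSet_Ioo] with t ht
    have h1t : (0:ℝ) < 1 - t := by linarith [ht.2]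
    have ht0 := ht.1
    have := hden t ht
    positivity
  rw [FF]
  rw [setIntegral_pos_iff_support_of_nonneg_ae hnn hint]
  have hsub : Ioo (0:ℝ) 1 ⊆ Function.support
      (fun t : ℝ => t ^ (2*H-2) * (1-t) ^ (1/2-H) * (1 - x*t)⁻¹) ∩ Ioo 0 1 := by
    intro t ht
    refine ⟨?_, ht⟩
    have h1t : (0:ℝ) < 1 - t := by linarith [ht.2]
    have := hden t ht
    have ht0 := ht.1
    exact (by positivity : (0:ℝ) < t ^ (2*H-2) * (1-t) ^ (1/2-H) * (1 - x*t)⁻¹).ne'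
  refine lt_of_lt_of_le ?_ (measure_mono hsub)
  simp

/-- the first-kind equation on `(0,1)` has the explicit solution
`u₀(x) = a_H x^{1/2−H}(1−x)^{1/2−H}`: there is a constant `a_H > 0` such that
`c_H ∫₀¹ |x−y|^{2H−2} u₀(y) dy = 1` for all `x ∈ (0,1)`; equivalently, the integral
`∫₀¹ |x−y|^{2H−2} y^{1/2−H}(1−y)^{1/2−H} dy` is finite, strictly positive and
independent of `x ∈ (0,1)`. -/
theorem stmt_3 (H : ℝ) (hH : H ∈ Set.Ioo (1/2 : ℝ) 1) :
    (∃ a : ℝ, 0 < a ∧ ∀ x ∈ Set.Ioo (0:ℝ) 1,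
      (H * (2*H - 1)) *
        ∫ y in Set.Ioo (0:ℝ) 1,
          |x - y| ^ (2*H - 2) * (a * y ^ (1/2 - H) * (1 - y) ^ (1/2 - H)) = 1)
    ∧ (∀ x ∈ Set.Ioo (0:ℝ) 1,
        IntegrableOn
          (fun y => |x - y| ^ (2*H - 2) * (y ^ (1/2 - H) * (1 - y) ^ (1/2 - H)))
          (Set.Ioo 0 1))
    ∧ (∀ x ∈ Set.Ioo (0:ℝ) 1,
        0 < ∫ y in Set.Ioo (0:ℝ) 1,
              |x - y| ^ (2*H - 2) * (y ^ (1/2 - H) * (1 - y) ^ (1/2 - H)))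
    ∧ (∀ x₁ ∈ Set.Ioo (0:ℝ) 1, ∀ x₂ ∈ Set.Ioo (0:ℝ) 1,
        (∫ y in Set.Ioo (0:ℝ) 1,
            |x₁ - y| ^ (2*H - 2) * (y ^ (1/2 - H) * (1 - y) ^ (1/2 - H)))
        = ∫ y in Set.Ioo (0:ℝ) 1,
            |x₂ - y| ^ (2*H - 2) * (y ^ (1/2 - H) * (1 - y) ^ (1/2 - H))) := by
  obtain ⟨hH1, hH2⟩ := hH
  -- positivity of the integral
  have hpos : ∀ x ∈ Set.Ioo (0:ℝ) 1,
      0 < ∫ y in Set.Ioo (0:ℝ) 1,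
            |x - y| ^ (2*H - 2) * (y ^ (1/2 - H) * (1 - y) ^ (1/2 - H)) := by
    intro x hx
    rw [(Isplit hH1 hH2 hx).2]
    have h1 : (0:ℝ) < x*(1-x) := mul_pos hx.1 (by linarith [hx.2])
    have h2 : (0:ℝ) < FF H x := FF_pos hH1 hH2 hx.2
    have h3 : (0:ℝ) < FF H (1-x) := FF_pos hH1 hH2 (by linarith [hx.1])
    positivity
  have hconst : ∀ x₁ ∈ Set.Ioo (0:ℝ) 1, ∀ x₂ ∈ Set.Ioo (0:ℝ) 1,
      (∫ y in Set.Ioo (0:ℝ) 1,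
          |x₁ - y| ^ (2*H - 2) * (y ^ (1/2 - H) * (1 - y) ^ (1/2 - H)))
      = ∫ y in Set.Ioo (0:ℝ) 1,
          |x₂ - y| ^ (2*H - 2) * (y ^ (1/2 - H) * (1 - y) ^ (1/2 - H)) := by
    intro x₁ h1 x₂ h2
    rw [(Isplit hH1 hH2 h1).2, (Isplit hH1 hH2 h2).2]
    exact Gconst hH1 hH2 h1 h2
  refine ⟨?_, fun x hx => (Isplit hH1 hH2 hx).1, hpos, hconst⟩
  -- existence of the constant a
  have hhalf : (1/2 : ℝ) ∈ Set.Ioo (0:ℝ) 1 := by norm_num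
  set C : ℝ := ∫ y in Set.Ioo (0:ℝ) 1,
      |(1/2 : ℝ) - y| ^ (2*H - 2) * (y ^ (1/2 - H) * (1 - y) ^ (1/2 - H)) with hC
  have hCpos : 0 < C := hpos _ hhalf
  have hcH : (0:ℝ) < H * (2*H - 1) := mul_pos (by linarith) (by linarith)
  refine ⟨(H * (2*H - 1) * C)⁻¹, inv_pos.mpr (mul_pos hcH hCpos), ?_⟩
  intro x hx
  set a : ℝ := (H * (2*H - 1) * C)⁻¹ with ha
  have hre : (fun y : ℝ => |x - y| ^ (2*H - 2) * (a * y ^ (1/2 - H) * (1 - y) ^ (1/2 - H)))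
      = fun y : ℝ => a * (|x - y| ^ (2*H - 2) * (y ^ (1/2 - H) * (1 - y) ^ (1/2 - H))) := by
    funext y
    ring
  rw [hre, MeasureTheory.integral_const_mul, hconst x hx _ hhalf, ← hC]
  rw [ha]
  field_simp
  exact div_self (ne_of_gt (by linarith))
end

section
/- Let H ∈ (1/2, 1). Then the integral I_H = ∫₀^∞ y^{H−3/2}/(y^{2H−1}+1) dy is finite and strictly positive, and lim_{ε→0⁺} √ε · Σ_{n=1}^∞ n^{−1/2−H}/(ε + n^{1−2H}) = I_H. -/
open MeasureTheory Real Set Filter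

noncomputable def auxF (H : ℝ) : ℝ → ℝ := fun y => y ^ (H - 3/2) / (y ^ (2*H - 1) + 1)

lemma auxF_nonneg (H : ℝ) {y : ℝ} (hy : 0 ≤ y) : 0 ≤ auxF H y := by
  unfold auxF
  positivity

lemma auxF_anti (H : ℝ) (hH : H ∈ Set.Ioo (1/2 : ℝ) 1) : AntitoneOn (auxF H) (Ioi 0) := by
  intro a ha b hb hab
  simp only [mem_Ioi] at ha hb
  unfold auxF
  apply div_le_div₀ (by positivity)
  · exact Real.rpow_le_rpow_of_nonpos ha hab (by linarith [hH.2])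
  · positivity
  · have : a ^ (2*H-1) ≤ b ^ (2*H-1) :=
      Real.rpow_le_rpow ha.le hab (by linarith [hH.1])
    linarith

lemma auxF_contOn (H : ℝ) : ContinuousOn (auxF H) (Ioi 0) := by
  apply ContinuousOn.div
  · exact fun y hy => (Real.continuousAt_rpow_const y _ (Or.inl (ne_of_gt hy))).continuousWithinAt
  · exact fun y hy => (((Real.continuousAt_rpow_const y _ (Or.inl (ne_of_gt hy))).add
      continuousAt_const)).continuousWithinAt
  · intro y hy
    have h1 : (0:ℝ) ≤ y ^ (2*H-1) := Real.rpow_nonneg (le_of_lt hy) _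
    nlinarith

lemma auxF_le_low (H : ℝ) {y : ℝ} (hy : 0 < y) : auxF H y ≤ y ^ (H - 3/2) := by
  unfold auxF
  apply div_le_self (by positivity)
  nlinarith [Real.rpow_nonneg hy.le (2*H-1)]

lemma auxF_le_high (H : ℝ) {y : ℝ} (hy : 0 < y) : auxF H y ≤ y ^ (-1/2 - H) := by
  unfold auxF
  have h1 : (0:ℝ) < y ^ (2*H-1) := Real.rpow_pos_of_pos hy _
  have h2 : y ^ (-1/2 - H) = y ^ (H - 3/2) / y ^ (2*H-1) := by
    rw [← Real.rpow_sub hy]; ring_nf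
  rw [h2]
  apply div_le_div_of_nonneg_left (by positivity) h1 (by linarith)

lemma auxF_integrableOn (H : ℝ) (hH : H ∈ Set.Ioo (1/2 : ℝ) 1) :
    IntegrableOn (auxF H) (Ioi 0) := by
  have h32 : -1 < H - 3/2 := by linarith [hH.1]
  have hhi : -1/2 - H < -1 := by linarith [hH.1]
  have hIoc : IntegrableOn (auxF H) (Ioc 0 1) := by
    have hmaj : IntegrableOn (fun y : ℝ => y ^ (H - 3/2)) (Ioc 0 1) := by
      have := intervalIntegral.intervalIntegrable_rpow' (a := 0) (b := 1) h32
      rwa [intervalIntegrable_iff_integrableOn_Ioc_of_le (by norm_num)] at this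
    apply hmaj.integrable.mono'
    · exact ((auxF_contOn H).mono (Ioc_subset_Ioi_self)).aestronglyMeasurable measurableSet_Ioc
    · filter_upwards [ae_restrict_mem measurableSet_Ioc] with y hy
      rw [Real.norm_eq_abs, abs_of_nonneg (auxF_nonneg H hy.1.le)]
      exact auxF_le_low H hy.1
  have hIoi : IntegrableOn (auxF H) (Ioi 1) := by
    have hmaj : IntegrableOn (fun y : ℝ => y ^ (-1/2 - H)) (Ioi 1) :=
      integrableOn_Ioi_rpow_of_lt hhi one_pos
    apply hmaj.integrable.mono'
    · exact ((auxF_contOn H).mono (Ioi_subset_Ioi (by norm_num))).aestronglyMeasurable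
        measurableSet_Ioi
    · filter_upwards [ae_restrict_mem measurableSet_Ioi] with y hy
      have hy0 : (0:ℝ) < y := lt_trans one_pos hy
      rw [Real.norm_eq_abs, abs_of_nonneg (auxF_nonneg H hy0.le)]
      exact auxF_le_high H hy0
  have := hIoc.union hIoi
  rwa [Ioc_union_Ioi_eq_Ioi (by norm_num : (0:ℝ) ≤ 1)] at this

lemma auxF_pos (H : ℝ) {y : ℝ} (hy : 0 < y) : 0 < auxF H y := by
  unfold auxF
  have h1 : (0:ℝ) < y ^ (H - 3/2) := Real.rpow_pos_of_pos hy _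
  have h2 : (0:ℝ) ≤ y ^ (2*H-1) := Real.rpow_nonneg hy.le _
  positivity

lemma auxF_integral_pos (H : ℝ) (hH : H ∈ Set.Ioo (1/2 : ℝ) 1) :
    0 < ∫ y in Ioi (0:ℝ), auxF H y := by
  have hint := auxF_integrableOn H hH
  have h12 : IntegrableOn (auxF H) (Ioc 1 2) :=
    hint.mono_set (fun y hy => lt_trans one_pos hy.1)
  have hlow : auxF H 2 * 1 ≤ ∫ y in Ioc (1:ℝ) 2, auxF H y := by
    have : ∫ y in Ioc (1:ℝ) 2, (auxF H 2 : ℝ) ≤ ∫ y in Ioc (1:ℝ) 2, auxF H y := by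
      apply setIntegral_mono_on (integrableOn_const (by simp)) h12
        measurableSet_Ioc
      intro y hy
      exact auxF_anti H hH (lt_trans one_pos hy.1) (by norm_num) hy.2
    rw [setIntegral_const, Real.volume_real_Ioc_of_le (by norm_num), smul_eq_mul, mul_comm] at this
    norm_num at this
    linarith
  have hmono : ∫ y in Ioc (1:ℝ) 2, auxF H y ≤ ∫ y in Ioi (0:ℝ), auxF H y := by
    apply setIntegral_mono_set hint
    · filter_upwards [ae_restrict_mem measurableSet_Ioi] with y hy
      exact auxF_nonneg H (le_of_lt hy)
    · filter_upwards with y hy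
      exact lt_trans one_pos hy.1
  have h2pos : 0 < auxF H 2 := auxF_pos H (by norm_num)
  linarith

lemma step_upper (H : ℝ) (hH : H ∈ Set.Ioo (1/2 : ℝ) 1) {δ : ℝ} (hδ : 0 < δ) (k : ℕ) :
    δ * auxF H ((k+1)*δ) ≤ ∫ y in Ioc ((k:ℝ)*δ) ((k+1)*δ), auxF H y := by
  have hsub : Ioc ((k:ℝ)*δ) ((k+1)*δ) ⊆ Ioi 0 := by
    intro y hy
    have : (0:ℝ) ≤ (k:ℝ)*δ := by positivity
    exact lt_of_le_of_lt this hy.1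
  have hint : IntegrableOn (auxF H) (Ioc ((k:ℝ)*δ) ((k+1)*δ)) :=
    (auxF_integrableOn H hH).mono_set hsub
  have h : ∫ y in Ioc ((k:ℝ)*δ) ((k+1)*δ), (auxF H ((k+1)*δ) : ℝ)
      ≤ ∫ y in Ioc ((k:ℝ)*δ) ((k+1)*δ), auxF H y := by
    apply setIntegral_mono_on (integrableOn_const (by simp)) hint
      measurableSet_Ioc
    intro y hy
    exact auxF_anti H hH (hsub hy) (mem_Ioi.mpr (by positivity)) hy.2
  rw [setIntegral_const, Real.volume_real_Ioc_of_le (by nlinarith : (k:ℝ)*δ ≤ (k+1)*δ),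
    smul_eq_mul] at h
  have : ((k:ℝ)+1)*δ - k*δ = δ := by ring
  rw [this] at h
  linarith

lemma step_lower (H : ℝ) (hH : H ∈ Set.Ioo (1/2 : ℝ) 1) {δ : ℝ} (hδ : 0 < δ) (k : ℕ) :
    ∫ y in Ioc ((k+1)*δ) ((k+2)*δ), auxF H y ≤ δ * auxF H ((k+1)*δ) := by
  have hsub : Ioc (((k:ℝ)+1)*δ) ((k+2)*δ) ⊆ Ioi 0 := by
    intro y hy
    have : (0:ℝ) < ((k:ℝ)+1)*δ := by positivity
    exact lt_trans this hy.1
  have hint : IntegrableOn (auxF H) (Ioc (((k:ℝ)+1)*δ) ((k+2)*δ)) :=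
    (auxF_integrableOn H hH).mono_set hsub
  have h : ∫ y in Ioc (((k:ℝ)+1)*δ) ((k+2)*δ), auxF H y
      ≤ ∫ y in Ioc (((k:ℝ)+1)*δ) ((k+2)*δ), (auxF H ((k+1)*δ) : ℝ) := by
    apply setIntegral_mono_on hint (integrableOn_const (by simp))
      measurableSet_Ioc
    intro y hy
    exact auxF_anti H hH (mem_Ioi.mpr (by positivity)) (hsub hy) hy.1.le
  rw [setIntegral_const, Real.volume_real_Ioc_of_le (by nlinarith : ((k:ℝ)+1)*δ ≤ (k+2)*δ),
    smul_eq_mul] at h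
  have : ((k:ℝ)+2)*δ - (k+1)*δ = δ := by ring
  rw [this] at h
  linarith

lemma auxF_summable (H : ℝ) (hH : H ∈ Set.Ioo (1/2 : ℝ) 1) {δ : ℝ} (hδ : 0 < δ) :
    Summable (fun k : ℕ => auxF H (((k:ℝ)+1)*δ)) := by
  have hhi : -1/2 - H < -1 := by linarith [hH.1]
  have hs : Summable (fun k : ℕ => ((k:ℝ)+1) ^ (-1/2 - H) * δ ^ (-1/2 - H)) := by
    apply Summable.mul_right
    have := (Real.summable_nat_rpow (p := -1/2 - H)).mpr hhi
    have h2 := (summable_nat_add_iff (f := fun n : ℕ => (n:ℝ) ^ (-1/2 - H)) 1).mpr this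
    simpa using h2
  apply hs.of_nonneg_of_le (fun k => auxF_nonneg H (by positivity))
  intro k
  have hk : (0:ℝ) < ((k:ℝ)+1)*δ := by positivity
  calc auxF H (((k:ℝ)+1)*δ) ≤ (((k:ℝ)+1)*δ) ^ (-1/2 - H) := auxF_le_high H hk
    _ = ((k:ℝ)+1) ^ (-1/2 - H) * δ ^ (-1/2 - H) := Real.mul_rpow (by positivity) hδ.le

lemma auxF_intervalIntegrable (H : ℝ) (hH : H ∈ Set.Ioo (1/2 : ℝ) 1) {a b : ℝ}
    (ha : 0 ≤ a) (hab : a ≤ b) : IntervalIntegrable (auxF H) volume a b := by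
  rw [intervalIntegrable_iff, uIoc_of_le hab]
  exact (auxF_integrableOn H hH).mono_set (fun y hy => lt_of_le_of_lt ha hy.1)

lemma key_upper (H : ℝ) (hH : H ∈ Set.Ioo (1/2 : ℝ) 1) {δ : ℝ} (hδ : 0 < δ) :
    δ * ∑' k : ℕ, auxF H (((k:ℝ)+1)*δ) ≤ ∫ y in Ioi (0:ℝ), auxF H y := by
  rw [← tsum_mul_left]
  apply Real.tsum_le_of_sum_range_le
  · exact fun k => mul_nonneg hδ.le (auxF_nonneg H (by positivity))
  intro N
  have hint : ∀ k, k < N → IntervalIntegrable (auxF H) volume ((k:ℝ)*δ) (((k:ℝ)+1)*δ) := by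
    intro k _
    exact auxF_intervalIntegrable H hH (by positivity) (by nlinarith)
  calc ∑ k ∈ Finset.range N, δ * auxF H (((k:ℝ)+1)*δ)
      ≤ ∑ k ∈ Finset.range N, ∫ y in ((k:ℝ)*δ)..(((k:ℝ)+1)*δ), auxF H y := by
        apply Finset.sum_le_sum
        intro k _
        rw [intervalIntegral.integral_of_le (by nlinarith)]
        exact step_upper H hH hδ k
    _ = ∫ y in ((0:ℝ)*δ)..((N:ℝ)*δ), auxF H y := by
        have := intervalIntegral.sum_integral_adjacent_intervals
          (a := fun k : ℕ => (k:ℝ)*δ) (f := auxF H) (μ := volume) (n := N) ?_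
        · convert this using 2 with k
          · push_cast; ring_nf
          · push_cast; ring_nf
        · intro k hk
          have := hint k hk
          convert this using 2
          push_cast; ring
    _ ≤ ∫ y in Ioi (0:ℝ), auxF H y := by
        rw [zero_mul, intervalIntegral.integral_of_le (by positivity)]
        apply setIntegral_mono_set (auxF_integrableOn H hH)
        · filter_upwards [ae_restrict_mem measurableSet_Ioi] with y hy
          exact auxF_nonneg H hy.le
        · filter_upwards with y hy using hy.1

lemma key_lower (H : ℝ) (hH : H ∈ Set.Ioo (1/2 : ℝ) 1) {δ : ℝ} (hδ : 0 < δ) :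
    ∫ y in Ioi δ, auxF H y ≤ δ * ∑' k : ℕ, auxF H (((k:ℝ)+1)*δ) := by
  have hsummable := auxF_summable H hH hδ
  have hIoi : IntegrableOn (auxF H) (Ioi δ) :=
    (auxF_integrableOn H hH).mono_set (fun y hy => lt_trans hδ hy)
  have htend : Tendsto (fun N : ℕ => ∫ y in δ..(((N:ℝ)+1)*δ), auxF H y) atTop
      (nhds (∫ y in Ioi δ, auxF H y)) := by
    apply intervalIntegral_tendsto_integral_Ioi δ hIoi
    apply Filter.Tendsto.atTop_mul_const hδ
    exact tendsto_atTop_add_const_right _ _ tendsto_natCast_atTop_atTop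
  apply le_of_tendsto htend
  filter_upwards with N
  calc ∫ y in δ..(((N:ℝ)+1)*δ), auxF H y
      = ∑ k ∈ Finset.range N, ∫ y in (((k:ℝ)+1)*δ)..(((k:ℝ)+2)*δ), auxF H y := by
        have := intervalIntegral.sum_integral_adjacent_intervals
          (a := fun k : ℕ => ((k:ℝ)+1)*δ) (f := auxF H) (μ := volume) (n := N) ?_
        · rw [show ((0:ℕ):ℝ) + 1 = 1 by norm_num, one_mul] at this
          rw [← this]
          apply Finset.sum_congr rfl
          intro k _
          push_cast
          ring_nf
        · intro k _
          apply auxF_intervalIntegrable H hH (by positivity)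
          push_cast
          nlinarith
    _ ≤ ∑ k ∈ Finset.range N, δ * auxF H (((k:ℝ)+1)*δ) := by
        apply Finset.sum_le_sum
        intro k _
        rw [intervalIntegral.integral_of_le (by nlinarith)]
        exact step_lower H hH hδ k
    _ ≤ δ * ∑' k : ℕ, auxF H (((k:ℝ)+1)*δ) := by
        rw [← tsum_mul_left]
        apply Summable.sum_le_tsum
        · exact fun k _ => mul_nonneg hδ.le (auxF_nonneg H (by positivity))
        · exact hsummable.mul_left δ

lemma tail_small (H : ℝ) (hH : H ∈ Set.Ioo (1/2 : ℝ) 1) {δ : ℝ} (hδ : 0 < δ) :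
    ∫ y in Ioc (0:ℝ) δ, auxF H y ≤ δ ^ (H - 1/2) / (H - 1/2) := by
  have h32 : -1 < H - 3/2 := by linarith [hH.1]
  have hmaj : IntegrableOn (fun y : ℝ => y ^ (H - 3/2)) (Ioc 0 δ) := by
    have := intervalIntegral.intervalIntegrable_rpow' (a := 0) (b := δ) h32
    rwa [intervalIntegrable_iff_integrableOn_Ioc_of_le hδ.le] at this
  have h1 : ∫ y in Ioc (0:ℝ) δ, auxF H y ≤ ∫ y in Ioc (0:ℝ) δ, y ^ (H - 3/2) := by
    apply setIntegral_mono_on ((auxF_integrableOn H hH).mono_set Ioc_subset_Ioi_self) hmaj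
      measurableSet_Ioc
    intro y hy
    exact auxF_le_low H hy.1
  have h2 : ∫ y in Ioc (0:ℝ) δ, (y:ℝ) ^ (H - 3/2) = δ ^ (H - 1/2) / (H - 1/2) := by
    rw [← intervalIntegral.integral_of_le hδ.le, integral_rpow (Or.inl h32)]
    rw [Real.zero_rpow (by linarith [hH.1] : H - 3/2 + 1 ≠ 0)]
    norm_num
    rw [show H - 3/2 + 1 = H - 1/2 by ring]
  linarith

lemma split_integral (H : ℝ) (hH : H ∈ Set.Ioo (1/2 : ℝ) 1) {δ : ℝ} (hδ : 0 < δ) :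
    ∫ y in Ioi (0:ℝ), auxF H y
      = (∫ y in Ioc (0:ℝ) δ, auxF H y) + ∫ y in Ioi δ, auxF H y := by
  rw [← setIntegral_union (Ioc_disjoint_Ioi le_rfl) measurableSet_Ioi
    ((auxF_integrableOn H hH).mono_set Ioc_subset_Ioi_self)
    ((auxF_integrableOn H hH).mono_set (fun y hy => lt_trans hδ hy))]
  rw [Ioc_union_Ioi_eq_Ioi hδ.le]

lemma term_eq (H : ℝ) (hH : H ∈ Set.Ioo (1/2 : ℝ) 1) {ε : ℝ} (hε : 0 < ε) {x : ℝ}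
    (hx : 0 < x) :
    Real.sqrt ε * (x ^ (-1/2 - H) / (ε + x ^ (1 - 2*H)))
      = ε ^ (1/(2*H-1)) * auxF H (x * ε ^ (1/(2*H-1))) := by
  have hq : (0:ℝ) < 2*H-1 := by linarith [hH.1]
  set δ := ε ^ (1/(2*H-1)) with hδdef
  have hδ : 0 < δ := Real.rpow_pos_of_pos hε _
  have hδq : δ ^ (2*H-1) = ε := by
    rw [hδdef, ← Real.rpow_mul hε.le, show 1/(2*H-1)*(2*H-1) = 1 by field_simp,
      Real.rpow_one]
  have hsq : δ * δ ^ (H - 3/2) = Real.sqrt ε := by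
    rw [show δ * δ ^ (H - 3/2) = δ ^ (1:ℝ) * δ ^ (H - 3/2) by rw [Real.rpow_one],
      ← Real.rpow_add hδ, hδdef, ← Real.rpow_mul hε.le,
      show 1/(2*H-1)*(1 + (H - 3/2)) = 1/2 by field_simp; ring,
      ← Real.sqrt_eq_rpow]
  unfold auxF
  rw [Real.mul_rpow hx.le hδ.le, Real.mul_rpow hx.le hδ.le, hδq]
  have h1 : x ^ (-1/2 - H) = x ^ (H - 3/2) * x ^ (1 - 2*H) := by
    rw [← Real.rpow_add hx]; ring_nf
  have h2 : x ^ (1 - 2*H) * x ^ (2*H - 1) = 1 := by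
    rw [← Real.rpow_add hx, show 1 - 2*H + (2*H - 1) = 0 by ring, Real.rpow_zero]
  have hden : ε + x ^ (1 - 2*H) = x ^ (1 - 2*H) * (x ^ (2*H-1) * ε + 1) := by
    rw [mul_add, mul_one, ← mul_assoc, h2, one_mul]
  have hx1 : x ^ (1 - 2*H) ≠ 0 := ne_of_gt (Real.rpow_pos_of_pos hx _)
  rw [h1, hden, mul_comm (x ^ (H - 3/2)) (x ^ (1 - 2*H)),
    mul_div_mul_left _ _ hx1, ← hsq]
  ring


/-- for `H ∈ (1/2,1)`, `I_H = ∫₀^∞ y^{H−3/2}/(y^{2H−1}+1) dy` is finite and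
positive, and `√ε · Σ_{n≥1} n^{−1/2−H}/(ε + n^{1−2H}) → I_H` as `ε → 0⁺`. -/
theorem stmt_4 (H : ℝ) (hH : H ∈ Set.Ioo (1/2 : ℝ) 1) :
    IntegrableOn (fun y : ℝ => y ^ (H - 3/2) / (y ^ (2*H - 1) + 1)) (Set.Ioi 0)
    ∧ 0 < ∫ y in Set.Ioi (0:ℝ), y ^ (H - 3/2) / (y ^ (2*H - 1) + 1)
    ∧ Filter.Tendsto
        (fun ε : ℝ => Real.sqrt ε *
          ∑' n : ℕ+, (n : ℝ) ^ (-1/2 - H) / (ε + (n : ℝ) ^ (1 - 2*H)))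
        (nhdsWithin 0 (Set.Ioi 0))
        (nhds (∫ y in Set.Ioi (0:ℝ), y ^ (H - 3/2) / (y ^ (2*H - 1) + 1))) := by
  have hq : (0:ℝ) < 2*H-1 := by linarith [hH.1]
  have hI : (∫ y in Set.Ioi (0:ℝ), y ^ (H - 3/2) / (y ^ (2*H - 1) + 1))
      = ∫ y in Ioi (0:ℝ), auxF H y := rfl
  refine ⟨auxF_integrableOn H hH, by rw [hI]; exact auxF_integral_pos H hH, ?_⟩
  rw [hI]
  set I := ∫ y in Ioi (0:ℝ), auxF H y with hIdef
  set d : ℝ → ℝ := fun ε => ε ^ (1/(2*H-1)) with hd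
  -- the main equality
  have hEq : ∀ ε ∈ Ioi (0:ℝ),
      Real.sqrt ε * ∑' n : ℕ+, (n : ℝ) ^ (-1/2 - H) / (ε + (n : ℝ) ^ (1 - 2*H))
        = d ε * ∑' k : ℕ, auxF H (((k:ℝ)+1) * d ε) := by
    intro ε hε
    rw [mem_Ioi] at hε
    rw [← tsum_mul_left, ← tsum_mul_left]
    have h1 : (fun n : ℕ+ => Real.sqrt ε * ((n : ℝ) ^ (-1/2 - H) / (ε + (n : ℝ) ^ (1 - 2*H))))
        = fun n : ℕ+ => d ε * auxF H ((n:ℝ) * d ε) := by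
      funext n
      exact term_eq H hH hε (by exact_mod_cast n.pos)
    rw [h1]
    rw [← Equiv.tsum_eq Equiv.pnatEquivNat.symm (fun n : ℕ+ => d ε * auxF H ((n:ℝ) * d ε))]
    apply tsum_congr
    intro k
    congr 2
    simp [Equiv.pnatEquivNat, Nat.succPNat]
  -- the tail bound
  have hsqrt : ∀ ε ∈ Ioi (0:ℝ), (d ε) ^ (H - 1/2) = Real.sqrt ε := by
    intro ε hε
    rw [mem_Ioi] at hε
    rw [hd, ← Real.rpow_mul hε.le, show 1/(2*H-1)*(H - 1/2) = 1/2 by field_simp,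
      ← Real.sqrt_eq_rpow]
  have hdpos : ∀ ε ∈ Ioi (0:ℝ), 0 < d ε := fun ε hε => Real.rpow_pos_of_pos hε _
  -- lower function tendsto
  have htail : Tendsto (fun ε => ∫ y in Ioc (0:ℝ) (d ε), auxF H y)
      (nhdsWithin 0 (Ioi 0)) (nhds 0) := by
    have hup : Tendsto (fun ε : ℝ => Real.sqrt ε / (H - 1/2))
        (nhdsWithin 0 (Ioi 0)) (nhds 0) := by
      have : Tendsto (fun ε : ℝ => Real.sqrt ε / (H - 1/2)) (nhds 0) (nhds 0) := by
        have := (Real.continuous_sqrt.tendsto 0).div_const (H - 1/2)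
        simpa using this
      exact this.mono_left nhdsWithin_le_nhds
    apply tendsto_of_tendsto_of_tendsto_of_le_of_le' tendsto_const_nhds hup
    · filter_upwards [self_mem_nhdsWithin] with ε hε
      exact setIntegral_nonneg measurableSet_Ioc (fun y hy => auxF_nonneg H hy.1.le)
    · filter_upwards [self_mem_nhdsWithin] with ε hε
      have := tail_small H hH (hdpos ε hε)
      rwa [hsqrt ε hε] at this
  have hlow : Tendsto (fun ε => ∫ y in Ioi (d ε), auxF H y)
      (nhdsWithin 0 (Ioi 0)) (nhds I) := by
    have h : Tendsto (fun ε => I - ∫ y in Ioc (0:ℝ) (d ε), auxF H y)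
        (nhdsWithin 0 (Ioi 0)) (nhds (I - 0)) := tendsto_const_nhds.sub htail
    rw [sub_zero] at h
    apply h.congr'
    filter_upwards [self_mem_nhdsWithin] with ε hε
    rw [hIdef, split_integral H hH (hdpos ε hε)]
    ring
  -- squeeze
  apply tendsto_of_tendsto_of_tendsto_of_le_of_le' hlow tendsto_const_nhds
  · filter_upwards [self_mem_nhdsWithin] with ε hε
    rw [hEq ε hε]
    exact key_lower H hH (hdpos ε hε)
  · filter_upwards [self_mem_nhdsWithin] with ε hε
    rw [hEq ε hε]
    exact key_upper H hH (hdpos ε hε)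
end

section
/- Let H ∈ (1/2, 1). Then the integral J_H = ∫₀^∞ y^{3H−5/2}/(y^{2H−1}+1)² dy is finite and strictly positive, and lim_{ε→0⁺} ε^{3/2} · Σ_{n=1}^∞ n^{−1/2−H}/(ε + n^{1−2H})² = J_H. -/
open MeasureTheory Real Set Filter

set_option linter.unusedVariables false
set_option maxHeartbeats 1000000

private lemma jh_integrable {a b : ℝ} (ha : -1 < a) (hb : 0 < b) (hab : a - 2*b < -1) :
    IntegrableOn (fun y : ℝ => y ^ a / (y ^ b + 1) ^ 2) (Ioi 0) := by
  have hmeas : Measurable (fun y : ℝ => y ^ a / (y ^ b + 1) ^ 2) := by fun_prop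
  have h1 : IntegrableOn (fun y : ℝ => y ^ a / (y ^ b + 1) ^ 2) (Ioc 0 1) := by
    have hint : IntegrableOn (fun y : ℝ => y ^ a) (Ioc 0 1) := by
      have := intervalIntegral.intervalIntegrable_rpow' (a := 0) (b := 1) ha
      rwa [intervalIntegrable_iff_integrableOn_Ioc_of_le zero_le_one] at this
    refine hint.mono' hmeas.aestronglyMeasurable ?_
    filter_upwards [ae_restrict_mem measurableSet_Ioc] with y hy
    have hy0 : 0 < y := hy.1
    have h2 : (1:ℝ) ≤ (y ^ b + 1) ^ 2 := by nlinarith [rpow_nonneg hy0.le b]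
    rw [Real.norm_eq_abs, abs_of_nonneg (by positivity)]
    calc y ^ a / (y ^ b + 1) ^ 2 ≤ y ^ a / 1 := by
          apply div_le_div_of_nonneg_left (by positivity) one_pos h2
      _ = y ^ a := by ring
  have h2 : IntegrableOn (fun y : ℝ => y ^ a / (y ^ b + 1) ^ 2) (Ioi 1) := by
    have hint : IntegrableOn (fun y : ℝ => y ^ (a - 2*b)) (Ioi 1) :=
      integrableOn_Ioi_rpow_of_lt hab zero_lt_one
    refine hint.mono' hmeas.aestronglyMeasurable ?_
    filter_upwards [ae_restrict_mem measurableSet_Ioi] with y hy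
    have hy0 : (0:ℝ) < y := lt_trans one_pos hy
    have hxb : (0:ℝ) < y ^ b := rpow_pos_of_pos hy0 b
    rw [Real.norm_eq_abs, abs_of_nonneg (by positivity)]
    have e : (y ^ b) ^ 2 = y ^ (2*b) := by
      rw [← Real.rpow_natCast (y ^ b) 2, ← Real.rpow_mul hy0.le]; norm_num; ring_nf
    calc y ^ a / (y ^ b + 1) ^ 2 ≤ y ^ a / (y ^ b) ^ 2 := by
          apply div_le_div_of_nonneg_left (by positivity) (by positivity)
          nlinarith
      _ = y ^ (a - 2*b) := by
          rw [e, ← Real.rpow_sub hy0]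
  have : Ioc (0:ℝ) 1 ∪ Ioi 1 = Ioi 0 := Ioc_union_Ioi_eq_Ioi zero_le_one
  rw [← this]
  exact h1.union h2

private lemma jh_antitone {a b : ℝ} (hb : 0 < b) {c : ℝ} (hc : 0 ≤ c)
    (hth : ∀ x, c < x → a ≤ (2*b - a) * x ^ b) :
    AntitoneOn (fun y : ℝ => y ^ a / (y ^ b + 1) ^ 2) (Ioi c) := by
  have hderiv : ∀ x, c < x → HasDerivAt (fun y : ℝ => y ^ a / (y ^ b + 1) ^ 2)
      ((a * x ^ (a-1) * (x ^ b + 1) ^ 2 - x ^ a * (2 * (x ^ b + 1) ^ 1 * (b * x ^ (b-1)))) /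
        ((x ^ b + 1) ^ 2) ^ 2) x := by
    intro x hx
    have hx0 : 0 < x := lt_of_le_of_lt hc hx
    have h1 : HasDerivAt (fun y : ℝ => y ^ a) (a * x ^ (a-1)) x :=
      Real.hasDerivAt_rpow_const (Or.inl hx0.ne')
    have h2 : HasDerivAt (fun y : ℝ => y ^ b + 1) (b * x ^ (b-1)) x :=
      (Real.hasDerivAt_rpow_const (Or.inl hx0.ne')).add_const 1
    have h3 := h2.pow 2
    have hne : ((x:ℝ) ^ b + 1) ^ 2 ≠ 0 := by positivity
    have := h1.div h3 hne
    exact this.congr_deriv (by simp)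
  apply antitoneOn_of_deriv_nonpos (convex_Ioi c)
  · intro x hx
    have hx0 : 0 < x := lt_of_le_of_lt hc hx
    exact ((hderiv x hx).continuousAt).continuousWithinAt
  · rw [interior_Ioi]
    intro x hx
    exact (hderiv x hx).differentiableAt.differentiableWithinAt
  · rw [interior_Ioi]
    intro x hx
    rw [(hderiv x hx).deriv]
    have hx0 : 0 < x := lt_of_le_of_lt hc hx
    have hxb : 0 < x ^ b := rpow_pos_of_pos hx0 b
    apply div_nonpos_of_nonpos_of_nonneg _ (by positivity)
    have e1 : x ^ (a-1) = x ^ a / x := by rw [Real.rpow_sub hx0, Real.rpow_one]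
    have e2 : x ^ (b-1) = x ^ b / x := by rw [Real.rpow_sub hx0, Real.rpow_one]
    rw [e1, e2]
    have key : a * (x ^ b + 1) - 2 * b * x ^ b ≤ 0 := by nlinarith [hth x hx]
    have hxa : 0 < x ^ a := rpow_pos_of_pos hx0 a
    have expand : a * (x ^ a / x) * (x ^ b + 1) ^ 2 - x ^ a * (2 * (x ^ b + 1) ^ 1 * (b * (x ^ b / x)))
        = (x ^ a * (x ^ b + 1) / x) * (a * (x ^ b + 1) - 2 * b * x ^ b) := by
      field_simp
    rw [expand]
    exact mul_nonpos_of_nonneg_of_nonpos (by positivity) key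

private lemma jh_step_integral {f : ℝ → ℝ} {δ : ℝ} (hδ : 0 < δ)
    (hint : IntegrableOn (fun y => f (δ * ⌈y / δ⌉)) (Ioi 0)) :
    ∫ y in Ioi (0:ℝ), f (δ * ⌈y / δ⌉) = ∑' n : ℕ, δ * f ((n + 1) * δ) := by
  have hU : (⋃ n : ℕ, Ioc ((n:ℝ) * δ) ((n + 1) * δ)) = Ioi (0:ℝ) := by
    ext y
    simp only [mem_iUnion, mem_Ioc, mem_Ioi]
    constructor
    · rintro ⟨n, hn, -⟩
      have : (0:ℝ) ≤ (n:ℝ) * δ := by positivity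
      linarith
    · intro hy
      have hyd : 0 < y / δ := div_pos hy hδ
      have hc1 : 1 ≤ ⌈y / δ⌉ := by
        exact_mod_cast Int.ceil_pos.mpr hyd
      refine ⟨(⌈y / δ⌉ - 1).toNat, ?_, ?_⟩
      · have hz : ((⌈y / δ⌉ - 1).toNat : ℤ) = ⌈y / δ⌉ - 1 := Int.toNat_of_nonneg (by omega)
        have h1 : ((⌈y / δ⌉ - 1).toNat : ℝ) = (⌈y / δ⌉ : ℝ) - 1 := by
          exact_mod_cast congrArg (fun z : ℤ => (z : ℝ)) hz
        rw [h1]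
        have := Int.ceil_lt_add_one (y / δ)
        have h2 : (⌈y / δ⌉ : ℝ) - 1 < y / δ := by linarith
        calc ((⌈y / δ⌉:ℝ) - 1) * δ < (y / δ) * δ := by
              apply mul_lt_mul_of_pos_right h2 hδ
          _ = y := by field_simp
      · have hz : ((⌈y / δ⌉ - 1).toNat : ℤ) = ⌈y / δ⌉ - 1 := Int.toNat_of_nonneg (by omega)
        have h1 : ((⌈y / δ⌉ - 1).toNat : ℝ) + 1 = (⌈y / δ⌉ : ℝ) := by
          have : ((⌈y / δ⌉ - 1).toNat : ℝ) = (⌈y / δ⌉ : ℝ) - 1 := by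
            exact_mod_cast congrArg (fun z : ℤ => (z : ℝ)) hz
          rw [this]; ring
        rw [h1]
        have := Int.le_ceil (y / δ)
        calc y = (y / δ) * δ := by field_simp
          _ ≤ (⌈y / δ⌉ : ℝ) * δ := by apply mul_le_mul_of_nonneg_right this hδ.le
  have hd : Pairwise (Function.onFun Disjoint fun n : ℕ => Ioc ((n:ℝ) * δ) ((n + 1) * δ)) := by
    intro i j hij
    rw [Function.onFun, Set.Ioc_disjoint_Ioc]
    rcases lt_or_gt_of_ne hij with h | h
    · have : ((i:ℝ) + 1) * δ ≤ (j:ℝ) * δ := by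
        apply mul_le_mul_of_nonneg_right _ hδ.le
        exact_mod_cast Nat.succ_le_of_lt h
      calc min (((i:ℝ)+1)*δ) (((j:ℝ)+1)*δ) ≤ ((i:ℝ)+1)*δ := min_le_left _ _
        _ ≤ (j:ℝ)*δ := this
        _ ≤ max ((i:ℝ)*δ) ((j:ℝ)*δ) := le_max_right _ _
    · have : ((j:ℝ) + 1) * δ ≤ (i:ℝ) * δ := by
        apply mul_le_mul_of_nonneg_right _ hδ.le
        exact_mod_cast Nat.succ_le_of_lt h
      calc min (((i:ℝ)+1)*δ) (((j:ℝ)+1)*δ) ≤ ((j:ℝ)+1)*δ := min_le_right _ _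
        _ ≤ (i:ℝ)*δ := this
        _ ≤ max ((i:ℝ)*δ) ((j:ℝ)*δ) := le_max_left _ _
  rw [← hU] at hint ⊢
  rw [integral_iUnion (fun n => measurableSet_Ioc) hd hint]
  congr 1
  ext n
  have hstep : ∀ y ∈ Ioc ((n:ℝ) * δ) ((n + 1) * δ), f (δ * ⌈y / δ⌉) = f (((n:ℝ) + 1) * δ) := by
    intro y hy
    have hceil : ⌈y / δ⌉ = (n:ℤ) + 1 := by
      rw [Int.ceil_eq_iff]
      constructor
      · push_cast
        have : (n:ℝ) * δ < y := hy.1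
        rw [lt_div_iff₀ hδ]
        push_cast
        linarith
      · push_cast
        rw [div_le_iff₀ hδ]
        push_cast
        convert hy.2 using 1
    rw [hceil]
    push_cast
    ring_nf
  rw [setIntegral_congr_fun measurableSet_Ioc hstep, setIntegral_const]
  rw [measureReal_def, Real.volume_Ioc]
  rw [ENNReal.toReal_ofReal (by linarith : (0:ℝ) ≤ ((n:ℝ)+1)*δ - (n:ℝ)*δ)]
  simp only [smul_eq_mul]
  ring_nf

private lemma jh_term_eq (H : ℝ) (h1 : 1/2 < H) (h2 : H < 1) (ε : ℝ) (hε : 0 < ε) (x : ℝ) (hx : 0 < x) :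
    ε ^ (3/2:ℝ) * (x ^ (-1/2 - H) / (ε + x ^ (1 - 2*H)) ^ 2)
      = ε ^ (1/(2*H-1)) * ((x * ε ^ (1/(2*H-1))) ^ (3*H - 5/2)
          / ((x * ε ^ (1/(2*H-1))) ^ (2*H - 1) + 1) ^ 2) := by
  set b := 2*H - 1 with hb_def
  have hb : 0 < b := by simp [hb_def]; linarith
  set δ := ε ^ (1/b) with hδ_def
  have hδ : 0 < δ := rpow_pos_of_pos hε _
  have hδb : δ ^ b = ε := by
    rw [hδ_def, ← Real.rpow_mul hε.le]
    rw [one_div, inv_mul_cancel₀ hb.ne', Real.rpow_one]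
  have hxb : 0 < x ^ b := rpow_pos_of_pos hx b
  have e1 : x ^ (1 - 2*H) = (x ^ b)⁻¹ := by
    rw [← Real.rpow_neg hx.le]; congr 1; rw [hb_def]; ring
  have e2 : (x * δ) ^ (3*H - 5/2) = x ^ (3*H - 5/2) * δ ^ (3*H - 5/2) :=
    Real.mul_rpow hx.le hδ.le
  have e3 : (x * δ) ^ b = x ^ b * ε := by
    rw [Real.mul_rpow hx.le hδ.le, hδb]
  have e4 : δ * δ ^ (3*H - 5/2) = ε ^ (3/2 : ℝ) := by
    have h := Real.rpow_add hδ 1 (3*H - 5/2)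
    rw [Real.rpow_one] at h
    rw [← h, hδ_def, ← Real.rpow_mul hε.le]
    congr 1
    field_simp [hb_def]
    ring
  have e5 : x ^ (3*H - 5/2) = x ^ (-1/2 - H) * (x ^ b) ^ 2 := by
    rw [← Real.rpow_natCast (x ^ b) 2, ← Real.rpow_mul hx.le, ← Real.rpow_add hx]
    congr 1
    rw [hb_def]; push_cast; ring
  rw [e1, e2, e5, e3]
  have hden : ε + (x ^ b)⁻¹ = (x ^ b * ε + 1) / x ^ b := by
    field_simp
  rw [hden, div_pow, div_div_eq_mul_div, ← e4]
  ring

private lemma jh_le_one {a b : ℝ} (ha : 0 ≤ a) (hb : 0 < b) (hab : a ≤ 2*b) {y : ℝ} (hy : 0 < y) :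
    y ^ a / (y ^ b + 1) ^ 2 ≤ 1 := by
  have hyb : 0 < y ^ b := rpow_pos_of_pos hy b
  rw [div_le_one (by positivity)]
  rcases le_or_gt y 1 with h | h
  · have : y ^ a ≤ 1 := Real.rpow_le_one hy.le h ha
    nlinarith
  · have h1 : y ^ a ≤ y ^ (2*b) := Real.rpow_le_rpow_of_exponent_le h.le hab
    have h2 : y ^ (2*b) = (y ^ b) ^ 2 := by
      rw [← Real.rpow_natCast (y ^ b) 2, ← Real.rpow_mul hy.le]; norm_num [mul_comm]
    nlinarith

private lemma jh_pos {a b : ℝ} (hint : IntegrableOn (fun y : ℝ => y ^ a / (y ^ b + 1) ^ 2) (Ioi 0)) :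
    0 < ∫ y in Ioi (0:ℝ), y ^ a / (y ^ b + 1) ^ 2 := by
  have hnn : 0 ≤ᵐ[volume.restrict (Ioi (0:ℝ))] fun y : ℝ => y ^ a / (y ^ b + 1) ^ 2 := by
    filter_upwards [ae_restrict_mem measurableSet_Ioi] with y hy
    have : 0 < y := hy
    positivity
  rw [setIntegral_pos_iff_support_of_nonneg_ae hnn hint]
  have hsup : Ioi (0:ℝ) ⊆ Function.support (fun y : ℝ => y ^ a / (y ^ b + 1) ^ 2) := by
    intro y hy
    have hy0 : (0:ℝ) < y := hy
    have : 0 < y ^ a / (y ^ b + 1) ^ 2 := by positivity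
    exact this.ne'
  have : Function.support (fun y : ℝ => y ^ a / (y ^ b + 1) ^ 2) ∩ Ioi 0 = Ioi 0 :=
    inter_eq_self_of_subset_right hsup
  rw [this, Real.volume_Ioi]
  simp

-- squeeze for grid point convergence

private lemma jh_grid_tendsto (y : ℝ) (hy : 0 < y) :
    Tendsto (fun δ : ℝ => δ * (⌈y / δ⌉ : ℤ)) (nhdsWithin 0 (Ioi 0)) (nhds y) := by
  have hle : ∀ δ ∈ Ioi (0:ℝ), y ≤ δ * (⌈y / δ⌉ : ℤ) := by
    intro δ hδ
    have hyd : δ * (y / δ) = y := by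
      rw [← mul_div_assoc]
      exact mul_div_cancel_left₀ y (ne_of_gt hδ)
    have := Int.le_ceil (y / δ)
    calc y = δ * (y / δ) := hyd.symm
      _ ≤ δ * (⌈y / δ⌉ : ℤ) := by
          apply mul_le_mul_of_nonneg_left this (le_of_lt hδ)
  have hge : ∀ δ ∈ Ioi (0:ℝ), δ * (⌈y / δ⌉ : ℤ) ≤ y + δ := by
    intro δ hδ
    have h := Int.ceil_lt_add_one (y / δ)
    have : δ * (⌈y / δ⌉ : ℤ) ≤ δ * (y / δ + 1) := by
      apply mul_le_mul_of_nonneg_left (le_of_lt h) (le_of_lt hδ)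
    have hyd : δ * (y / δ) = y := by
      rw [← mul_div_assoc]
      exact mul_div_cancel_left₀ y (ne_of_gt hδ)
    calc δ * (⌈y / δ⌉ : ℤ) ≤ δ * (y / δ + 1) := this
      _ = y + δ := by rw [mul_add, hyd, mul_one]
  have t1 : Tendsto (fun _ : ℝ => y) (nhdsWithin 0 (Ioi 0)) (nhds y) := tendsto_const_nhds
  have t2 : Tendsto (fun δ : ℝ => y + δ) (nhdsWithin 0 (Ioi 0)) (nhds y) := by
    have : Tendsto (fun δ : ℝ => y + δ) (nhds 0) (nhds (y + 0)) :=
      (continuous_const.add continuous_id).tendsto 0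
    simpa using this.mono_left nhdsWithin_le_nhds
  refine tendsto_of_tendsto_of_tendsto_of_le_of_le' t1 t2 ?_ ?_
  · filter_upwards [self_mem_nhdsWithin] with δ hδ using hle δ hδ
  · filter_upwards [self_mem_nhdsWithin] with δ hδ using hge δ hδ

-- composition filter

private lemma jh_comp {b : ℝ} (hb : 0 < b) :
    Tendsto (fun ε : ℝ => ε ^ (1/b)) (nhdsWithin 0 (Ioi 0)) (nhdsWithin 0 (Ioi 0)) := by
  rw [tendsto_nhdsWithin_iff]
  constructor
  · have h := (Real.continuousAt_rpow_const 0 (1/b) (Or.inr (by positivity))).tendsto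
    rw [Real.zero_rpow (by positivity : (1/b) ≠ 0)] at h
    exact h.mono_left nhdsWithin_le_nhds
  · filter_upwards [self_mem_nhdsWithin] with ε hε
    exact rpow_pos_of_pos hε _


private lemma measurable_int_cast_ceil_div (δ : ℝ) :
    Measurable (fun y : ℝ => ((⌈y / δ⌉ : ℤ) : ℝ)) := by
  have h1 : Measurable (fun y : ℝ => ⌈y / δ⌉) :=
    Int.measurable_ceil.comp (measurable_id.div_const δ)
  exact measurable_from_top.comp h1

/-- for `H ∈ (1/2,1)`, `J_H = ∫₀^∞ y^{3H−5/2}/(y^{2H−1}+1)² dy` is finite and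
positive, and `ε^{3/2} · Σ_{n≥1} n^{−1/2−H}/(ε + n^{1−2H})² → J_H` as `ε → 0⁺`. -/
theorem stmt_5 (H : ℝ) (hH : H ∈ Set.Ioo (1/2 : ℝ) 1) :
    IntegrableOn (fun y : ℝ => y ^ (3*H - 5/2) / (y ^ (2*H - 1) + 1) ^ 2) (Set.Ioi 0)
    ∧ 0 < ∫ y in Set.Ioi (0:ℝ), y ^ (3*H - 5/2) / (y ^ (2*H - 1) + 1) ^ 2
    ∧ Filter.Tendsto
        (fun ε : ℝ => ε ^ (3/2 : ℝ) *
          ∑' n : ℕ+, (n : ℝ) ^ (-1/2 - H) / (ε + (n : ℝ) ^ (1 - 2*H)) ^ 2)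
        (nhdsWithin 0 (Set.Ioi 0))
        (nhds (∫ y in Set.Ioi (0:ℝ), y ^ (3*H - 5/2) / (y ^ (2*H - 1) + 1) ^ 2)) := by
  obtain ⟨hH1, hH2⟩ := hH
  have hb : (0:ℝ) < 2*H - 1 := by linarith
  have ha : (-1:ℝ) < 3*H - 5/2 := by linarith
  have habi : 3*H - 5/2 - 2*(2*H - 1) < -1 := by linarith
  have hf_int : IntegrableOn (fun y : ℝ => y ^ (3*H - 5/2) / (y ^ (2*H - 1) + 1) ^ 2)
      (Ioi 0) := jh_integrable ha hb habi
  refine ⟨hf_int, jh_pos hf_int, ?_⟩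
  set f : ℝ → ℝ := fun y => y ^ (3*H - 5/2) / (y ^ (2*H - 1) + 1) ^ 2 with hf_def
  -- threshold point
  set y₀ : ℝ := (max ((3*H - 5/2)/(2*(2*H-1) - (3*H - 5/2))) 1) ^ (1/(2*H-1)) with hy0_def
  have hmaxpos : (0:ℝ) < max ((3*H - 5/2)/(2*(2*H-1) - (3*H - 5/2))) 1 :=
    lt_of_lt_of_le one_pos (le_max_right _ _)
  have hy₀ : 0 < y₀ := rpow_pos_of_pos hmaxpos _
  have hy₀b : y₀ ^ (2*H-1) = max ((3*H - 5/2)/(2*(2*H-1) - (3*H - 5/2))) 1 := by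
    rw [hy0_def, ← Real.rpow_mul hmaxpos.le, one_div, inv_mul_cancel₀ hb.ne', Real.rpow_one]
  -- antitonicity
  have hanti : AntitoneOn f (Ioi y₀) := by
    rw [hf_def]
    apply jh_antitone hb hy₀.le
    intro x hx
    have hxb : y₀ ^ (2*H-1) ≤ x ^ (2*H-1) := Real.rpow_le_rpow hy₀.le (le_of_lt hx) hb.le
    rw [hy₀b] at hxb
    have h2 : (3*H-5/2)/(2*(2*H-1)-(3*H-5/2)) ≤ x ^ (2*H-1) :=
      le_trans (le_max_left _ _) hxb
    rw [div_le_iff₀ (by linarith)] at h2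
    nlinarith [h2]
  have hantiglob : 3*H - 5/2 ≤ 0 → AntitoneOn f (Ioi 0) := by
    intro hA
    rw [hf_def]
    apply jh_antitone hb le_rfl
    intro x hx
    have hxx : (0:ℝ) ≤ (2*(2*H-1) - (3*H-5/2)) * x ^ (2*H-1) :=
      mul_nonneg (by linarith) (rpow_nonneg (le_of_lt hx) _)
    linarith
  -- grid point facts
  have hpt_ge : ∀ δ ∈ Ioi (0:ℝ), ∀ y ∈ Ioi (0:ℝ), y ≤ δ * ⌈y / δ⌉ := by
    intro δ hδ y hy
    have h1 := Int.le_ceil (y / δ)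
    have h2 : δ * (y/δ) ≤ δ * ⌈y/δ⌉ := mul_le_mul_of_nonneg_left h1 (le_of_lt hδ)
    rwa [← mul_div_assoc, mul_div_cancel_left₀ y (ne_of_gt hδ)] at h2
  -- uniform bound
  have key_bound : ∀ δ ∈ Ioi (0:ℝ), ∀ y ∈ Ioi (0:ℝ),
      f (δ * ⌈y / δ⌉) ≤ f y + Set.indicator (Ioc 0 y₀) (fun _ => (1:ℝ)) y := by
    intro δ hδ y hy
    have hpt : y ≤ δ * ⌈y / δ⌉ := hpt_ge δ hδ y hy
    have hpt0 : (0:ℝ) < δ * ⌈y / δ⌉ := lt_of_lt_of_le hy hpt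
    rcases le_or_gt (3*H - 5/2) 0 with hA | hA
    · have h1 : f (δ * ⌈y/δ⌉) ≤ f y := hantiglob hA hy hpt0 hpt
      have h2 : (0:ℝ) ≤ Set.indicator (Ioc 0 y₀) (fun _ => (1:ℝ)) y :=
        Set.indicator_nonneg (fun _ _ => zero_le_one) y
      linarith
    · rcases le_or_gt y y₀ with hyy | hyy
      · have h1 : f (δ * ⌈y/δ⌉) ≤ 1 := by
          rw [hf_def]
          exact jh_le_one (le_of_lt hA) hb (by linarith) hpt0
        have h2 : Set.indicator (Ioc 0 y₀) (fun _ => (1:ℝ)) y = 1 :=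
          Set.indicator_of_mem (show y ∈ Ioc 0 y₀ from ⟨hy, hyy⟩) fun _ => (1:ℝ)
        have h3 : 0 ≤ f y := by
          rw [hf_def]
          have hy' : (0:ℝ) < y := hy
          positivity
        linarith
      · have h1 : f (δ * ⌈y/δ⌉) ≤ f y := hanti hyy (lt_of_lt_of_le hyy hpt) hpt
        have h2 : (0:ℝ) ≤ Set.indicator (Ioc 0 y₀) (fun _ => (1:ℝ)) y :=
          Set.indicator_nonneg (fun _ _ => zero_le_one) y
        linarith
  -- nonnegativity of grid function
  have hg_nn : ∀ δ ∈ Ioi (0:ℝ), ∀ y ∈ Ioi (0:ℝ), 0 ≤ f (δ * ⌈y / δ⌉) := by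
    intro δ hδ y hy
    have hpt0 : (0:ℝ) < δ * ⌈y / δ⌉ := lt_of_lt_of_le hy (hpt_ge δ hδ y hy)
    rw [hf_def]
    positivity
  -- dominating function integrable
  have hind : Integrable (Set.indicator (Ioc (0:ℝ) y₀) (fun _ => (1:ℝ))) := by
    rw [integrable_indicator_iff measurableSet_Ioc]
    exact integrableOn_const measure_Ioc_lt_top.ne
  have hD_int : IntegrableOn
      (fun y => f y + Set.indicator (Ioc 0 y₀) (fun _ => (1:ℝ)) y) (Ioi 0) :=
    hf_int.add hind.integrableOn
  -- measurability
  have hfmeas : Measurable f := by rw [hf_def]; fun_prop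
  have hgmeas : ∀ δ : ℝ,
      AEStronglyMeasurable (fun y => f (δ * ⌈y / δ⌉)) (volume.restrict (Ioi 0)) := by
    intro δ
    apply Measurable.aestronglyMeasurable
    apply hfmeas.comp
    apply Measurable.const_mul
    exact measurable_int_cast_ceil_div δ
  -- integrability of grid functions
  have hgint : ∀ δ ∈ Ioi (0:ℝ), IntegrableOn (fun y => f (δ * ⌈y / δ⌉)) (Ioi 0) := by
    intro δ hδ
    apply hD_int.mono' (hgmeas δ)
    filter_upwards [ae_restrict_mem measurableSet_Ioi] with y hy
    rw [Real.norm_eq_abs, abs_of_nonneg (hg_nn δ hδ y hy)]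
    exact key_bound δ hδ y hy
  -- dominated convergence
  have hDCT : Tendsto (fun δ : ℝ => ∫ y in Ioi (0:ℝ), f (δ * ⌈y / δ⌉))
      (nhdsWithin 0 (Ioi 0)) (nhds (∫ y in Ioi (0:ℝ), f y)) := by
    apply tendsto_integral_filter_of_dominated_convergence
      (fun y => f y + Set.indicator (Ioc 0 y₀) (fun _ => (1:ℝ)) y)
    · exact Filter.Eventually.of_forall (fun δ => hgmeas δ)
    · filter_upwards [self_mem_nhdsWithin] with δ hδ
      filter_upwards [ae_restrict_mem measurableSet_Ioi] with y hy
      rw [Real.norm_eq_abs, abs_of_nonneg (hg_nn δ hδ y hy)]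
      exact key_bound δ hδ y hy
    · exact hD_int
    · filter_upwards [ae_restrict_mem measurableSet_Ioi] with y hy
      have hy' : (0:ℝ) < y := hy
      have hcont : ContinuousAt f y := by
        rw [hf_def]
        have h1 := Real.continuousAt_rpow_const y (3*H - 5/2) (Or.inl (ne_of_gt hy'))
        have h2 := Real.continuousAt_rpow_const y (2*H - 1) (Or.inl (ne_of_gt hy'))
        have h3 : ContinuousAt (fun z : ℝ => (z ^ (2*H-1) + 1) ^ 2) y :=
          (h2.add continuousAt_const).pow 2
        exact h1.div h3 (by positivity)
      exact hcont.tendsto.comp (jh_grid_tendsto y hy')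
  -- compose with ε ↦ ε^(1/(2H-1))
  have hcomp := hDCT.comp (jh_comp hb)
  apply hcomp.congr'
  filter_upwards [self_mem_nhdsWithin] with ε hε
  have hε' : (0:ℝ) < ε := hε
  have hδpos : (0:ℝ) < ε ^ (1/(2*H-1)) := rpow_pos_of_pos hε' _
  have e1 : ε ^ (3/2:ℝ) * ∑' n : ℕ+, (n : ℝ) ^ (-1/2 - H) / (ε + (n : ℝ) ^ (1 - 2*H)) ^ 2
      = ∑' n : ℕ+, ε ^ (1/(2*H-1)) * f ((n:ℝ) * ε ^ (1/(2*H-1))) := by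
    rw [← tsum_mul_left]
    apply tsum_congr
    intro n
    have hn : (0:ℝ) < (n:ℝ) := by exact_mod_cast n.pos
    rw [hf_def]
    exact jh_term_eq H hH1 hH2 ε hε' (n:ℝ) hn
  have e2 : (∑' n : ℕ+, ε ^ (1/(2*H-1)) * f ((n:ℝ) * ε ^ (1/(2*H-1))))
      = ∑' n : ℕ, ε ^ (1/(2*H-1)) * f (((n:ℝ) + 1) * ε ^ (1/(2*H-1))) := by
    rw [← Equiv.pnatEquivNat.symm.tsum_eq
      (fun m : ℕ+ => ε ^ (1/(2*H-1)) * f ((m:ℝ) * ε ^ (1/(2*H-1))))]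
    apply tsum_congr
    intro n
    have hcoe : ((Equiv.pnatEquivNat.symm n : ℕ+) : ℝ) = (n:ℝ) + 1 := by
      simp [Equiv.pnatEquivNat]
    rw [hcoe]
  have e3 : (∑' n : ℕ, ε ^ (1/(2*H-1)) * f (((n:ℝ) + 1) * ε ^ (1/(2*H-1))))
      = ∫ y in Ioi (0:ℝ), f (ε ^ (1/(2*H-1)) * ⌈y / ε ^ (1/(2*H-1))⌉) :=
    (jh_step_integral hδpos (hgint _ hδpos)).symm
  show (fun δ : ℝ => ∫ y in Ioi (0:ℝ), f (δ * ⌈y / δ⌉)) (ε ^ (1/(2*H-1)))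
      = ε ^ (3/2:ℝ) * ∑' n : ℕ+, (n : ℝ) ^ (-1/2 - H) / (ε + (n : ℝ) ^ (1 - 2*H)) ^ 2
  rw [e1, e2, e3]
end

section
/- Let H ∈ (0, 1/2). Then the integral I_H = ∫₀^∞ y^{−1/2−H}/(y^{1−2H}+1) dy is finite and strictly positive, and lim_{ε→0⁺} √ε · Σ_{n=1}^∞ n^{H−3/2}/(ε + n^{2H−1}) = I_H. -/
open MeasureTheory Real Set Filter

section RiemannAux

variable {f : ℝ → ℝ}

/-- Upper bound on a single term of the Riemann sum. -/
lemma term_upper (hanti : AntitoneOn f (Ioi 0)) (hint : IntegrableOn f (Ioi 0)) {δ : ℝ}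
    (hδ : 0 < δ) (n : ℕ+) :
    δ * f (δ * n) ≤ ∫ y in Ioc (δ * ((n : ℝ) - 1)) (δ * n), f y := by
  have hn1 : (1 : ℝ) ≤ (n : ℝ) := by exact_mod_cast n.one_le
  have hsub : Ioc (δ * ((n : ℝ) - 1)) (δ * n) ⊆ Ioi 0 := by
    intro y hy
    have : 0 ≤ δ * ((n : ℝ) - 1) := mul_nonneg hδ.le (by linarith)
    exact lt_of_le_of_lt this hy.1
  have hconst : δ * f (δ * n) = ∫ _ in Ioc (δ * ((n : ℝ) - 1)) (δ * n), f (δ * n) := by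
    rw [setIntegral_const, Real.volume_real_Ioc_of_le (by nlinarith), smul_eq_mul]
    congr 1
    ring
  rw [hconst]
  refine setIntegral_mono_on (integrableOn_const (by simp [Real.volume_Ioc]))
    (hint.mono_set hsub) measurableSet_Ioc ?_
  intro y hy
  exact hanti (hsub hy) (mul_pos hδ (by exact_mod_cast n.pos)) (hy.2)

/-- Lower bound on a single term of the Riemann sum. -/
lemma term_lower (hanti : AntitoneOn f (Ioi 0)) (hint : IntegrableOn f (Ioi 0)) {δ : ℝ}
    (hδ : 0 < δ) (n : ℕ+) :
    (∫ y in Ioc (δ * n) (δ * ((n : ℝ) + 1)), f y) ≤ δ * f (δ * n) := by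
  have hn0 : (0 : ℝ) < (n : ℝ) := by exact_mod_cast n.pos
  have hδn : 0 < δ * (n : ℝ) := mul_pos hδ hn0
  have hsub : Ioc (δ * (n : ℝ)) (δ * ((n : ℝ) + 1)) ⊆ Ioi 0 := fun y hy =>
    lt_trans hδn hy.1
  have hconst : δ * f (δ * n) = ∫ _ in Ioc (δ * (n : ℝ)) (δ * ((n : ℝ) + 1)), f (δ * n) := by
    rw [setIntegral_const, Real.volume_real_Ioc_of_le (by nlinarith), smul_eq_mul]
    congr 1
    ring
  rw [hconst]
  refine setIntegral_mono_on (hint.mono_set hsub)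
    (integrableOn_const (by simp [Real.volume_Ioc])) measurableSet_Ioc ?_
  intro y hy
  exact hanti hδn (hsub hy) hy.1.le

lemma sum_upper (hanti : AntitoneOn f (Ioi 0)) (hnn : ∀ y ∈ Ioi (0:ℝ), 0 ≤ f y)
    (hint : IntegrableOn f (Ioi 0)) {δ : ℝ} (hδ : 0 < δ) (s : Finset ℕ+) :
    ∑ n ∈ s, δ * f (δ * n) ≤ ∫ y in Ioi (0:ℝ), f y := by
  set I : ℕ+ → Set ℝ := fun n => Ioc (δ * ((n : ℝ) - 1)) (δ * n) with hI
  have hIsub : ∀ n : ℕ+, I n ⊆ Ioi 0 := by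
    intro n y hy
    have hn1 : (1 : ℝ) ≤ (n : ℝ) := by exact_mod_cast n.one_le
    have : 0 ≤ δ * ((n : ℝ) - 1) := mul_nonneg hδ.le (by linarith)
    exact lt_of_le_of_lt this hy.1
  have hdisj : Set.Pairwise ↑s (Function.onFun Disjoint I) := by
    intro m _ n _ hmn
    rcases hmn.lt_or_gt with h | h
    · have : (m : ℝ) ≤ (n : ℝ) - 1 := by
        have : (m : ℕ) + 1 ≤ (n : ℕ) := h
        have := (Nat.cast_le (α := ℝ)).2 this
        push_cast at this; linarith
      exact Set.Ioc_disjoint_Ioc.2 (le_trans (min_le_left _ _)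
        (le_trans (mul_le_mul_of_nonneg_left this hδ.le) (le_max_right _ _)))
    · have : (n : ℝ) ≤ (m : ℝ) - 1 := by
        have : (n : ℕ) + 1 ≤ (m : ℕ) := h
        have := (Nat.cast_le (α := ℝ)).2 this
        push_cast at this; linarith
      exact Set.Ioc_disjoint_Ioc.2 (le_trans (min_le_right _ _)
        (le_trans (mul_le_mul_of_nonneg_left this hδ.le) (le_max_left _ _)))
  calc ∑ n ∈ s, δ * f (δ * n) ≤ ∑ n ∈ s, ∫ y in I n, f y := by
        exact Finset.sum_le_sum fun n _ => term_upper hanti hint hδ n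
    _ = ∫ y in ⋃ n ∈ s, I n, f y := by
        exact (integral_biUnion_finset s (fun n _ => measurableSet_Ioc) hdisj
          (fun n _ => hint.mono_set (hIsub n))).symm
    _ ≤ ∫ y in Ioi (0:ℝ), f y := by
        refine setIntegral_mono_set hint
          ((ae_restrict_iff' measurableSet_Ioi).2 (ae_of_all _ hnn)) ?_
        exact HasSubset.Subset.eventuallyLE (by
          intro y hy
          simp only [Set.mem_iUnion] at hy
          obtain ⟨n, _, hy⟩ := hy
          exact hIsub n hy)

lemma summable_riemann (hanti : AntitoneOn f (Ioi 0)) (hnn : ∀ y ∈ Ioi (0:ℝ), 0 ≤ f y)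
    (hint : IntegrableOn f (Ioi 0)) {δ : ℝ} (hδ : 0 < δ) :
    Summable (fun n : ℕ+ => δ * f (δ * n)) := by
  refine summable_of_sum_le (fun n => ?_) (fun s => sum_upper hanti hnn hint hδ s)
  exact mul_nonneg hδ.le (hnn _ (mul_pos hδ (by exact_mod_cast n.pos)))

lemma tsum_upper (hanti : AntitoneOn f (Ioi 0)) (hnn : ∀ y ∈ Ioi (0:ℝ), 0 ≤ f y)
    (hint : IntegrableOn f (Ioi 0)) {δ : ℝ} (hδ : 0 < δ) :
    δ * ∑' n : ℕ+, f (δ * n) ≤ ∫ y in Ioi (0:ℝ), f y := by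
  rw [← tsum_mul_left]
  exact Summable.tsum_le_of_sum_le (summable_riemann hanti hnn hint hδ)
    (fun s => sum_upper hanti hnn hint hδ s)

lemma iUnion_Ioc_eq (δ : ℝ) (hδ : 0 < δ) :
    (⋃ n : ℕ+, Ioc (δ * (n : ℝ)) (δ * ((n : ℝ) + 1))) = Ioi δ := by
  ext y
  simp only [Set.mem_iUnion, Set.mem_Ioc, Set.mem_Ioi]
  constructor
  · rintro ⟨n, h1, _⟩
    have hn1 : (1 : ℝ) ≤ (n : ℝ) := by exact_mod_cast n.one_le
    nlinarith
  · intro hy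
    have hyδ : 1 < y / δ := (one_lt_div hδ).2 hy
    have hk2 : 2 ≤ ⌈y / δ⌉₊ := by
      by_contra h
      push_neg at h
      interval_cases h' : ⌈y / δ⌉₊ <;>
        [skip; skip] <;> have := Nat.le_ceil (y / δ) <;> rw [h'] at this <;>
        push_cast at this <;> linarith
    refine ⟨⟨⌈y / δ⌉₊ - 1, by omega⟩, ?_, ?_⟩
    · have h1 : (⌈y / δ⌉₊ : ℝ) < y / δ + 1 := Nat.ceil_lt_add_one (by positivity)
      have : ((⌈y / δ⌉₊ - 1 : ℕ) : ℝ) = (⌈y / δ⌉₊ : ℝ) - 1 := by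
        have : 1 ≤ ⌈y / δ⌉₊ := by omega
        push_cast [this]; ring
      show δ * ((⌈y / δ⌉₊ - 1 : ℕ) : ℝ) < y
      rw [this]
      have h1' : ((⌈y / δ⌉₊ : ℝ) - 1) < y / δ := by linarith
      rw [lt_div_iff₀ hδ] at h1'
      nlinarith
    · have h2 : y / δ ≤ (⌈y / δ⌉₊ : ℝ) := Nat.le_ceil _
      have : ((⌈y / δ⌉₊ - 1 : ℕ) : ℝ) = (⌈y / δ⌉₊ : ℝ) - 1 := by
        have : 1 ≤ ⌈y / δ⌉₊ := by omega
        push_cast [this]; ring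
      show y ≤ δ * (((⌈y / δ⌉₊ - 1 : ℕ) : ℝ) + 1)
      rw [this]
      rw [div_le_iff₀ hδ] at h2
      nlinarith

lemma tsum_lower (hanti : AntitoneOn f (Ioi 0)) (hnn : ∀ y ∈ Ioi (0:ℝ), 0 ≤ f y)
    (hint : IntegrableOn f (Ioi 0)) {δ : ℝ} (hδ : 0 < δ) :
    (∫ y in Ioi δ, f y) ≤ δ * ∑' n : ℕ+, f (δ * n) := by
  set I : ℕ+ → Set ℝ := fun n => Ioc (δ * (n : ℝ)) (δ * ((n : ℝ) + 1)) with hI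
  have hU : (⋃ n : ℕ+, I n) = Ioi δ := iUnion_Ioc_eq δ hδ
  have hdisj : Pairwise (Function.onFun Disjoint I) := by
    intro m n hmn
    rcases hmn.lt_or_gt with h | h
    · have : (m : ℝ) + 1 ≤ (n : ℝ) := by exact_mod_cast Nat.succ_le_of_lt h
      exact Set.Ioc_disjoint_Ioc.2 (le_trans (min_le_left _ _)
        (le_trans (mul_le_mul_of_nonneg_left this hδ.le) (le_max_right _ _)))
    · have : (n : ℝ) + 1 ≤ (m : ℝ) := by exact_mod_cast Nat.succ_le_of_lt h
      exact Set.Ioc_disjoint_Ioc.2 (le_trans (min_le_right _ _)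
        (le_trans (mul_le_mul_of_nonneg_left this hδ.le) (le_max_left _ _)))
  have hintU : IntegrableOn f (⋃ n : ℕ+, I n) := by
    rw [hU]; exact hint.mono_set (Ioi_subset_Ioi hδ.le)
  have hsum := hasSum_integral_iUnion (μ := volume) (f := f)
    (fun n : ℕ+ => measurableSet_Ioc) hdisj hintU
  rw [hU] at hsum
  rw [← hsum.tsum_eq, ← tsum_mul_left]
  exact Summable.tsum_le_tsum (fun n => term_lower hanti hint hδ n) hsum.summable
    (summable_riemann hanti hnn hint hδ)

lemma tail_integral_tendsto (hnn : ∀ y ∈ Ioi (0:ℝ), 0 ≤ f y)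
    (hint : IntegrableOn f (Ioi 0)) :
    Tendsto (fun δ : ℝ => ∫ y in Ioi δ, f y) (nhdsWithin 0 (Ioi 0))
      (nhds (∫ y in Ioi (0:ℝ), f y)) := by
  set g : ℝ → ℝ := (Ioi (0:ℝ)).indicator f with hg
  have hgint : Integrable g :=
    (integrable_indicator_iff measurableSet_Ioi).2 hint
  have key : Tendsto (fun δ : ℝ => ∫ y in Ioc (0:ℝ) δ, f y) (nhdsWithin 0 (Ioi 0)) (nhds 0) := by
    have := tendsto_integral_filter_of_dominated_convergence (μ := volume)
      (F := fun δ : ℝ => (Ioc (0:ℝ) δ).indicator g) (f := fun _ : ℝ => (0:ℝ))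
      (l := nhdsWithin 0 (Ioi 0))
      (bound := (Ioc (0:ℝ) 1).indicator (fun y => |g y|))
      (Eventually.of_forall fun δ => hgint.aestronglyMeasurable.indicator measurableSet_Ioc)
      ?_ ((hgint.abs).indicator measurableSet_Ioc) ?_
    · rw [integral_zero] at this
      refine this.congr' ?_
      filter_upwards [self_mem_nhdsWithin] with δ hδ
      rw [integral_indicator measurableSet_Ioc]
      refine setIntegral_congr_fun measurableSet_Ioc (fun y hy => ?_)
      simp [hg, Set.indicator_of_mem (show y ∈ Ioi (0:ℝ) from hy.1)]
    · filter_upwards [Ioo_mem_nhdsGT_of_mem (by norm_num : (0:ℝ) ∈ Ico (0:ℝ) 1)]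
        with δ hδ
      refine ae_of_all _ fun y => ?_
      by_cases hy : y ∈ Ioc (0:ℝ) δ
      · rw [Set.indicator_of_mem hy]
        have hy1 : y ∈ Ioc (0:ℝ) 1 := ⟨hy.1, hy.2.trans hδ.2.le⟩
        rw [Set.indicator_of_mem hy1, Real.norm_eq_abs]
      · rw [Set.indicator_of_notMem hy]
        simp only [norm_zero]
        exact Set.indicator_nonneg (fun y _ => abs_nonneg _) y
    · refine ae_of_all _ fun y => ?_
      by_cases hy : 0 < y
      · have : ∀ᶠ δ in nhdsWithin (0:ℝ) (Ioi 0), (Ioc (0:ℝ) δ).indicator g y = 0 := by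
          filter_upwards [Ioo_mem_nhdsGT_of_mem (show (0:ℝ) ∈ Ico 0 y from ⟨le_refl _, hy⟩)]
            with δ hδ
          exact Set.indicator_of_notMem (fun hmem => absurd hmem.2 (not_le.2 hδ.2)) g
        exact tendsto_const_nhds.congr' (this.mono fun δ h => h.symm)
      · have : ∀ δ : ℝ, (Ioc (0:ℝ) δ).indicator g y = 0 := fun δ =>
          Set.indicator_of_notMem (fun hmem => hy hmem.1) g
        simp only [this]
        exact tendsto_const_nhds
  have split : ∀ᶠ δ in nhdsWithin (0:ℝ) (Ioi 0),
      (∫ y in Ioi δ, f y) = (∫ y in Ioi (0:ℝ), f y) - ∫ y in Ioc (0:ℝ) δ, f y := by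
    filter_upwards [self_mem_nhdsWithin] with δ (hδ : 0 < δ)
    have : (∫ y in Ioi (0:ℝ), f y) = (∫ y in Ioc (0:ℝ) δ, f y) + ∫ y in Ioi δ, f y := by
      rw [← setIntegral_union (Set.Ioc_disjoint_Ioi le_rfl) measurableSet_Ioi
        (hint.mono_set (fun y hy => hy.1)) (hint.mono_set (Ioi_subset_Ioi hδ.le)),
        Set.Ioc_union_Ioi_eq_Ioi hδ.le]
    linarith
  have final : Tendsto (fun δ : ℝ => (∫ y in Ioi (0:ℝ), f y) - ∫ y in Ioc (0:ℝ) δ, f y)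
      (nhdsWithin 0 (Ioi 0)) (nhds ((∫ y in Ioi (0:ℝ), f y) - 0)) :=
    tendsto_const_nhds.sub key
  rw [sub_zero] at final
  exact final.congr' (split.mono fun δ h => h.symm)

lemma riemann_tendsto (hanti : AntitoneOn f (Ioi 0)) (hnn : ∀ y ∈ Ioi (0:ℝ), 0 ≤ f y)
    (hint : IntegrableOn f (Ioi 0)) :
    Tendsto (fun δ : ℝ => δ * ∑' n : ℕ+, f (δ * n)) (nhdsWithin 0 (Ioi 0))
      (nhds (∫ y in Ioi (0:ℝ), f y)) := by
  refine tendsto_of_tendsto_of_tendsto_of_le_of_le' (tail_integral_tendsto hnn hint)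
    tendsto_const_nhds ?_ ?_
  · filter_upwards [self_mem_nhdsWithin] with δ hδ
    exact tsum_lower hanti hnn hint hδ
  · filter_upwards [self_mem_nhdsWithin] with δ hδ
    exact tsum_upper hanti hnn hint hδ

end RiemannAux

/-- for `H ∈ (0,1/2)`, `I_H = ∫₀^∞ y^{−1/2−H}/(y^{1−2H}+1) dy` is finite and
positive, and `√ε · Σ_{n≥1} n^{H−3/2}/(ε + n^{2H−1}) → I_H` as `ε → 0⁺`. -/
theorem stmt_6 (H : ℝ) (hH : H ∈ Set.Ioo (0 : ℝ) (1/2)) :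
    IntegrableOn (fun y : ℝ => y ^ (-1/2 - H) / (y ^ (1 - 2*H) + 1)) (Set.Ioi 0)
    ∧ 0 < ∫ y in Set.Ioi (0:ℝ), y ^ (-1/2 - H) / (y ^ (1 - 2*H) + 1)
    ∧ Filter.Tendsto
        (fun ε : ℝ => Real.sqrt ε *
          ∑' n : ℕ+, (n : ℝ) ^ (H - 3/2) / (ε + (n : ℝ) ^ (2*H - 1)))
        (nhdsWithin 0 (Set.Ioi 0))
        (nhds (∫ y in Set.Ioi (0:ℝ), y ^ (-1/2 - H) / (y ^ (1 - 2*H) + 1))) := by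
  obtain ⟨h0, h2⟩ := hH
  have hb_pos : (0:ℝ) < 1 - 2*H := by linarith
  set F : ℝ → ℝ := fun y : ℝ => y ^ (-1/2 - H) / (y ^ (1 - 2*H) + 1) with hFdef
  have hFpos : ∀ y ∈ Ioi (0:ℝ), 0 < F y := by
    intro y hy
    have hy0 : (0:ℝ) < y := hy
    have h1 : 0 < y ^ (-1/2 - H) := Real.rpow_pos_of_pos hy0 _
    have h2' : 0 < y ^ (1 - 2*H) + 1 := by
      have : (0:ℝ) ≤ y ^ (1-2*H) := Real.rpow_nonneg hy0.le _
      linarith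
    exact div_pos h1 h2'
  have hFnn : ∀ y ∈ Ioi (0:ℝ), 0 ≤ F y := fun y hy => (hFpos y hy).le
  have hanti : AntitoneOn F (Ioi 0) := by
    intro a ha b hb hab
    have ha0 : (0:ℝ) < a := ha
    have hnum : b ^ (-1/2 - H) ≤ a ^ (-1/2 - H) :=
      Real.rpow_le_rpow_of_nonpos ha0 hab (by linarith)
    have hden : a ^ (1 - 2*H) + 1 ≤ b ^ (1 - 2*H) + 1 := by
      have := Real.rpow_le_rpow ha0.le hab hb_pos.le
      linarith
    have hden0 : 0 < a ^ (1 - 2*H) + 1 := by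
      have : (0:ℝ) ≤ a ^ (1-2*H) := Real.rpow_nonneg ha0.le _
      linarith
    exact div_le_div₀ (Real.rpow_pos_of_pos ha0 _).le hnum hden0 hden
  have hcont : ContinuousOn F (Ioi 0) := by
    apply ContinuousOn.div
    · exact fun y hy =>
        (Real.continuousAt_rpow_const y _ (Or.inl (ne_of_gt hy))).continuousWithinAt
    · refine ContinuousOn.add ?_ continuousOn_const
      exact fun y hy =>
        (Real.continuousAt_rpow_const y _ (Or.inl (ne_of_gt hy))).continuousWithinAt
    · intro y hy
      have : (0:ℝ) ≤ y ^ (1-2*H) := Real.rpow_nonneg (le_of_lt hy) _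
      intro hcontra; linarith [hcontra ▸ this]
  have hint : IntegrableOn F (Ioi 0) := by
    have hsplit : Ioi (0:ℝ) = Ioc 0 1 ∪ Ioi 1 := (Set.Ioc_union_Ioi_eq_Ioi zero_le_one).symm
    rw [hsplit]
    apply IntegrableOn.union
    · have hmeas : AEStronglyMeasurable F (volume.restrict (Ioc (0:ℝ) 1)) :=
        (hcont.mono (fun y hy => hy.1)).aestronglyMeasurable measurableSet_Ioc
      have hdom : IntegrableOn (fun y : ℝ => y ^ (-1/2 - H)) (Ioc (0:ℝ) 1) := by
        have := intervalIntegral.intervalIntegrable_rpow'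
          (a := 0) (b := 1) (r := -1/2 - H) (by linarith)
        rwa [intervalIntegrable_iff_integrableOn_Ioc_of_le zero_le_one] at this
      refine hdom.mono' hmeas ?_
      refine (ae_restrict_iff' measurableSet_Ioc).2 (ae_of_all _ fun y hy => ?_)
      have hy0 : (0:ℝ) < y := hy.1
      rw [Real.norm_eq_abs, abs_of_nonneg (hFnn y hy0)]
      have hden1 : 1 ≤ y ^ (1 - 2*H) + 1 := by
        have : (0:ℝ) ≤ y ^ (1-2*H) := Real.rpow_nonneg hy0.le _
        linarith
      exact div_le_self (Real.rpow_nonneg hy0.le _) hden1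
    · have hmeas : AEStronglyMeasurable F (volume.restrict (Ioi (1:ℝ))) :=
        (hcont.mono (Ioi_subset_Ioi zero_le_one)).aestronglyMeasurable
          measurableSet_Ioi
      have hdom : IntegrableOn (fun y : ℝ => y ^ (H - 3/2)) (Ioi (1:ℝ)) :=
        integrableOn_Ioi_rpow_of_lt (by linarith) zero_lt_one
      refine hdom.mono' hmeas ?_
      refine (ae_restrict_iff' measurableSet_Ioi).2 (ae_of_all _ fun y hy => ?_)
      have hy0 : (0:ℝ) < y := lt_trans zero_lt_one hy
      rw [Real.norm_eq_abs, abs_of_nonneg (hFnn y hy0)]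
      have hden : 0 < y ^ (1 - 2*H) := Real.rpow_pos_of_pos hy0 _
      have step : F y ≤ y ^ (-1/2 - H) / y ^ (1 - 2*H) := by
        have hnum : (0:ℝ) ≤ y ^ (-1/2 - H) := Real.rpow_nonneg hy0.le _
        have : y ^ (1 - 2*H) ≤ y ^ (1 - 2*H) + 1 := by linarith
        exact div_le_div_of_nonneg_left hnum hden this |>.trans_eq rfl
      have eqr : y ^ (-1/2 - H) / y ^ (1 - 2*H) = y ^ (H - 3/2) := by
        rw [← Real.rpow_sub hy0]
        congr 1; ring
      exact step.trans_eq eqr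
  have hpos : 0 < ∫ y in Ioi (0:ℝ), F y := by
    rw [setIntegral_pos_iff_support_of_nonneg_ae
      ((ae_restrict_iff' measurableSet_Ioi).2 (ae_of_all _ hFnn)) hint]
    have hsub : Ioi (0:ℝ) ⊆ Function.support F ∩ Ioi 0 :=
      fun y hy => ⟨ne_of_gt (hFpos y hy), hy⟩
    refine lt_of_lt_of_le ?_ (measure_mono hsub)
    rw [Real.volume_Ioi]
    exact ENNReal.zero_lt_top
  refine ⟨hint, hpos, ?_⟩
  have hR := riemann_tendsto hanti hFnn hint
  set c : ℝ := (1 - 2*H)⁻¹ with hc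
  have hcpos : 0 < c := inv_pos.2 hb_pos
  have hδmap : Tendsto (fun ε : ℝ => ε ^ c) (nhdsWithin 0 (Ioi 0)) (nhdsWithin 0 (Ioi 0)) := by
    rw [tendsto_nhdsWithin_iff]
    constructor
    · have hc0 : ContinuousAt (fun x : ℝ => x ^ c) 0 :=
        Real.continuousAt_rpow_const 0 c (Or.inr hcpos.le)
      have := hc0.tendsto.mono_left (nhdsWithin_le_nhds (s := Ioi (0:ℝ)))
      rwa [Real.zero_rpow (ne_of_gt hcpos)] at this
    · filter_upwards [self_mem_nhdsWithin] with ε (hε : 0 < ε)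
      exact Real.rpow_pos_of_pos hε c
  refine (hR.comp hδmap).congr' ?_
  filter_upwards [self_mem_nhdsWithin] with ε (hε : 0 < ε)
  show (ε ^ c) * ∑' n : ℕ+, F (ε ^ c * n) =
    Real.sqrt ε * ∑' n : ℕ+, (n : ℝ) ^ (H - 3/2) / (ε + (n : ℝ) ^ (2*H - 1))
  set δ : ℝ := ε ^ c with hδdef
  have hδ : 0 < δ := Real.rpow_pos_of_pos hε c
  have hδb : δ ^ (1 - 2*H) = ε := by
    rw [hδdef, ← Real.rpow_mul hε.le, inv_mul_cancel₀ (ne_of_gt hb_pos), Real.rpow_one]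
  rw [← tsum_mul_left, ← tsum_mul_left]
  refine tsum_congr fun n => ?_
  set x : ℝ := (n : ℝ) with hx
  have hx0 : (0:ℝ) < x := by rw [hx]; exact_mod_cast n.pos
  have hmul1 : (δ * x) ^ (-1/2 - H) = δ ^ (-1/2 - H) * x ^ (-1/2 - H) :=
    Real.mul_rpow hδ.le hx0.le
  have hmul2 : (δ * x) ^ (1 - 2*H) = ε * x ^ (1 - 2*H) := by
    rw [Real.mul_rpow hδ.le hx0.le, hδb]
  have hsqrt : Real.sqrt ε = δ ^ ((1:ℝ)/2 - H) := by
    rw [Real.sqrt_eq_rpow, ← hδb, ← Real.rpow_mul hδ.le]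
    congr 1; ring
  have hδ1 : δ * δ ^ (-1/2 - H) = δ ^ ((1:ℝ)/2 - H) := by
    nth_rewrite 1 [← Real.rpow_one δ]
    rw [← Real.rpow_add hδ]
    congr 1; ring
  have key : x ^ (-1/2 - H) / (ε * x ^ (1-2*H) + 1) = x ^ (H-3/2) / (ε + x ^ (2*H-1)) := by
    have e1 : x ^ (-1/2 - H) = x ^ (H - 3/2) * x ^ (1 - 2*H) := by
      rw [← Real.rpow_add hx0]
      congr 1; ring
    have e2 : ε * x ^ (1-2*H) + 1 = (ε + x ^ (2*H-1)) * x ^ (1-2*H) := by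
      rw [add_mul, ← Real.rpow_add hx0]
      have h3 : 2*H-1+(1-2*H) = 0 := by ring
      rw [h3, Real.rpow_zero]
    rw [e1, e2, mul_div_mul_right _ _ (ne_of_gt (Real.rpow_pos_of_pos hx0 _))]
  show δ * ((δ * x) ^ (-1/2 - H) / ((δ * x) ^ (1 - 2*H) + 1)) =
    Real.sqrt ε * (x ^ (H - 3/2) / (ε + x ^ (2*H - 1)))
  rw [hmul1, hmul2, hsqrt, ← key, ← hδ1]
  ring
end

section
/- Let H ∈ (0, 1/2). Then the integral J_H = ∫₀^∞ y^{1/2−3H}/(y^{1−2H}+1)² dy is finite and strictly positive, and lim_{ε→0⁺} ε^{3/2} · Σ_{n=1}^∞ n^{H−3/2}/(ε + n^{2H−1})² = J_H. -/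
open MeasureTheory Real Set Filter

noncomputable def fH (H : ℝ) (y : ℝ) : ℝ := y ^ (1/2 - 3*H) / (y ^ (1 - 2*H) + 1) ^ 2

lemma fH_meas (H : ℝ) : Measurable (fH H) := by unfold fH; fun_prop

lemma fH_pos (H : ℝ) {y : ℝ} (hy : 0 < y) : 0 < fH H y := by
  unfold fH
  have h1 : (0:ℝ) < y ^ (1/2 - 3*H) := rpow_pos_of_pos hy _
  have h2 : (0:ℝ) < y ^ (1 - 2*H) := rpow_pos_of_pos hy _
  positivity

lemma fH_le_one (H : ℝ) {y : ℝ} (hy : 0 < y) : fH H y ≤ y ^ (1/2 - 3*H) := by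
  unfold fH
  have h2 : (0:ℝ) ≤ y ^ (1 - 2*H) := (rpow_pos_of_pos hy _).le
  have hd : (1:ℝ) ≤ (y ^ (1 - 2*H) + 1) ^ 2 := by nlinarith
  exact div_le_self (rpow_pos_of_pos hy _).le hd

lemma fH_le_two (H : ℝ) {y : ℝ} (hy : 0 < y) : fH H y ≤ y ^ (H - 3/2) := by
  unfold fH
  have h2 : (0:ℝ) < y ^ (1 - 2*H) := rpow_pos_of_pos hy _
  have hd : (y ^ (1 - 2*H)) ^ 2 ≤ (y ^ (1 - 2*H) + 1) ^ 2 := by nlinarith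
  have hnum : (0:ℝ) ≤ y ^ (1/2 - 3*H) := (rpow_pos_of_pos hy _).le
  calc y ^ (1/2 - 3*H) / (y ^ (1 - 2*H) + 1) ^ 2
      ≤ y ^ (1/2 - 3*H) / (y ^ (1 - 2*H)) ^ 2 :=
        div_le_div_of_nonneg_left hnum (by positivity) hd
    _ = y ^ (H - 3/2) := by
        rw [← rpow_natCast (y ^ (1 - 2*H)) 2, ← rpow_mul hy.le, ← rpow_sub hy]
        norm_num
        ring_nf

noncomputable def bH (H : ℝ) : ℝ → ℝ :=
  (Ioc (0:ℝ) 1).indicator (fun y => y ^ (1/2 - 3*H) + 2)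
    + (Ioi (1:ℝ)).indicator (fun y => y ^ (H - 3/2))

lemma bH_int (H : ℝ) (h0 : 0 < H) (h1 : H < 1/2) : Integrable (bH H) := by
  apply Integrable.add
  · rw [integrable_indicator_iff measurableSet_Ioc]
    apply Integrable.add
    · have : IntegrableOn (fun y : ℝ => y ^ (1/2 - 3*H)) (Ioo (0:ℝ) 1) :=
        (intervalIntegral.integrableOn_Ioo_rpow_iff one_pos).mpr (by linarith)
      exact this.congr_set_ae Ioo_ae_eq_Ioc.symm
    · exact integrableOn_const (by simp [Real.volume_Ioc])
  · rw [integrable_indicator_iff measurableSet_Ioi]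
    exact (integrableOn_Ioi_rpow_iff one_pos).mpr (by linarith)

lemma fH_le_bH (H : ℝ) (h0 : 0 < H) (h1 : H < 1/2) {y z : ℝ} (hy : 0 < y)
    (hz1 : y ≤ z) (hz2 : z ≤ y + 1) : fH H z ≤ bH H y := by
  have hz : 0 < z := lt_of_lt_of_le hy hz1
  unfold bH
  rcases le_or_gt y 1 with hy1 | hy1
  · have hb : fH H z ≤ y ^ (1/2 - 3*H) + 2 := by
      refine (fH_le_one H hz).trans ?_
      have hyP : (0:ℝ) ≤ y ^ (1/2 - 3*H) := (rpow_pos_of_pos hy _).le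
      rcases le_or_gt (1/2 - 3*H) 0 with hp | hp
      · have : z ^ (1/2 - 3*H) ≤ y ^ (1/2 - 3*H) := rpow_le_rpow_of_nonpos hy hz1 hp
        linarith
      · have hz2' : z ≤ 2 := by linarith
        have h2 : z ^ (1/2 - 3*H) ≤ (2:ℝ) ^ (1/2 - 3*H) := rpow_le_rpow hz.le hz2' hp.le
        have h3 : (2:ℝ) ^ (1/2 - 3*H) ≤ (2:ℝ) ^ (1:ℝ) :=
          rpow_le_rpow_of_exponent_le one_le_two (by linarith)
        rw [rpow_one] at h3
        linarith
    have hmem : y ∈ Ioc (0:ℝ) 1 := ⟨hy, hy1⟩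
    have hnmem : y ∉ Ioi (1:ℝ) := by simp [mem_Ioi]; linarith
    simp only [Pi.add_apply, indicator_of_mem hmem, indicator_of_notMem hnmem, add_zero]
    exact hb
  · have hb : fH H z ≤ y ^ (H - 3/2) := by
      refine (fH_le_two H hz).trans ?_
      exact rpow_le_rpow_of_nonpos hy hz1 (by linarith)
    have hmem : y ∈ Ioi (1:ℝ) := hy1
    have hnmem : y ∉ Ioc (0:ℝ) 1 := by simp [mem_Ioc]; intro _; linarith
    simp only [Pi.add_apply, indicator_of_mem hmem, indicator_of_notMem hnmem, zero_add]
    exact hb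

lemma integrableOn_of_le_bH (H : ℝ) (h0 : 0 < H) (h1 : H < 1/2) {g : ℝ → ℝ}
    (hg : Measurable g) (hbd : ∀ y ∈ Ioi (0:ℝ), ‖g y‖ ≤ bH H y) :
    IntegrableOn g (Ioi 0) := by
  refine Integrable.mono ((bH_int H h0 h1).restrict) hg.aestronglyMeasurable ?_
  rw [ae_restrict_iff' measurableSet_Ioi]
  exact ae_of_all _ fun y hy => (hbd y hy).trans (le_abs_self _)

lemma fH_integrableOn (H : ℝ) (h0 : 0 < H) (h1 : H < 1/2) :
    IntegrableOn (fH H) (Ioi 0) := by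
  refine integrableOn_of_le_bH H h0 h1 (fH_meas H) fun y hy => ?_
  rw [Real.norm_eq_abs, abs_of_nonneg (fH_pos H hy).le]
  exact fH_le_bH H h0 h1 hy le_rfl (by linarith)

lemma ceil_mul_le {y h : ℝ} (hh : 0 < h) : y ≤ (⌈y/h⌉ : ℝ) * h :=
  (div_le_iff₀ hh).mp (Int.le_ceil _)

lemma ceil_mul_lt {y h : ℝ} (hh : 0 < h) : (⌈y/h⌉ : ℝ) * h ≤ y + h := by
  have h1 := Int.ceil_lt_add_one (y/h)
  have := mul_lt_mul_of_pos_right h1 hh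
  rw [add_mul, div_mul_cancel₀ _ hh.ne', one_mul] at this
  exact this.le

lemma key_term (H : ℝ) (h0 : 0 < H) (h1 : H < 1/2) {ε : ℝ} (hε : 0 < ε) (n : ℕ+) :
    ε ^ (3/2:ℝ) * ((n:ℝ) ^ (H - 3/2) / (ε + (n:ℝ) ^ (2*H - 1)) ^ 2)
      = fH H ((n:ℝ) * ε ^ (1 - 2*H)⁻¹) * ε ^ (1 - 2*H)⁻¹ := by
  set h : ℝ := ε ^ (1 - 2*H)⁻¹ with hdef
  have hα : (0:ℝ) < 1 - 2*H := by linarith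
  have hh : 0 < h := rpow_pos_of_pos hε _
  have hN : (0:ℝ) < (n:ℝ) := by exact_mod_cast n.pos
  have hhα : h ^ (1 - 2*H) = ε := by
    rw [hdef, ← rpow_mul hε.le, inv_mul_cancel₀ hα.ne', rpow_one]
  set A : ℝ := (n:ℝ) ^ (1 - 2*H) with hAdef
  have hA : 0 < A := rpow_pos_of_pos hN _
  have h2 : (n:ℝ) ^ (2*H - 1) = A⁻¹ := by
    rw [show (2*H - 1 : ℝ) = -(1 - 2*H) by ring, rpow_neg hN.le]
  have hNp : (n:ℝ) ^ (H - 3/2) * A ^ 2 = (n:ℝ) ^ (1/2 - 3*H) := by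
    rw [hAdef, ← rpow_natCast ((n:ℝ) ^ (1 - 2*H)) 2, ← rpow_mul hN.le, ← rpow_add hN]
    norm_num
    ring_nf
  have hε32 : ε ^ (3/2:ℝ) = h ^ (1/2 - 3*H) * h := by
    rw [← hhα, ← rpow_mul hh.le, show (1 - 2*H) * (3/2:ℝ) = (1/2 - 3*H) + 1 by ring,
      rpow_add hh, rpow_one]
  have hmul : ((n:ℝ) * h) ^ (1 - 2*H) = A * ε := by
    rw [mul_rpow hN.le hh.le, hhα]
  have hmup : ((n:ℝ) * h) ^ (1/2 - 3*H) = (n:ℝ) ^ (1/2 - 3*H) * h ^ (1/2 - 3*H) :=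
    mul_rpow hN.le hh.le
  rw [fH, hmul, hmup, h2]
  have hd1 : ε + A⁻¹ = (A * ε + 1) / A := by field_simp
  have hd2 : (0:ℝ) < A * ε + 1 := by positivity
  rw [hd1, div_pow, div_div_eq_mul_div, mul_div_assoc', div_mul_eq_mul_div]
  congr 1
  rw [← hNp, hε32]
  ring

lemma key_sum (H : ℝ) (h0 : 0 < H) (h1 : H < 1/2) {ε : ℝ} (hε : 0 < ε) :
    ε ^ (3/2:ℝ) * ∑' n : ℕ+, (n:ℝ) ^ (H - 3/2) / (ε + (n:ℝ) ^ (2*H - 1)) ^ 2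
      = ∑' n : ℕ, fH H (((n:ℝ) + 1) * ε ^ (1 - 2*H)⁻¹) * ε ^ (1 - 2*H)⁻¹ := by
  rw [← tsum_mul_left, tsum_congr (fun n : ℕ+ => key_term H h0 h1 hε n),
    ← Equiv.pnatEquivNat.symm.tsum_eq
      (fun m : ℕ+ => fH H ((m:ℝ) * ε ^ (1 - 2*H)⁻¹) * ε ^ (1 - 2*H)⁻¹)]
  refine tsum_congr fun n => ?_
  have : ((Equiv.pnatEquivNat.symm n : ℕ+) : ℝ) = (n:ℝ) + 1 := by
    simp [Equiv.pnatEquivNat, Nat.succPNat]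
  simp only [this]

lemma key_union {h : ℝ} (hh : 0 < h) :
    Ioi (0:ℝ) = ⋃ n : ℕ, Ioc ((n:ℝ) * h) (((n:ℝ) + 1) * h) := by
  ext y
  simp only [mem_Ioi, mem_iUnion, mem_Ioc]
  constructor
  · intro hy
    have hyh : 0 < y / h := div_pos hy hh
    have h1' : (1:ℤ) ≤ ⌈y / h⌉ := Int.one_le_ceil_iff.mpr hyh
    refine ⟨(⌈y / h⌉ - 1).toNat, ?_, ?_⟩
    · have hc : (((⌈y / h⌉ - 1).toNat : ℕ) : ℝ) = (⌈y / h⌉ : ℝ) - 1 := by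
        exact_mod_cast congrArg (fun z : ℤ => (z : ℝ))
          (Int.toNat_of_nonneg (by omega : (0:ℤ) ≤ ⌈y / h⌉ - 1))
      rw [hc]
      have hlt := Int.ceil_lt_add_one (y / h)
      have := mul_lt_mul_of_pos_right (by linarith : (⌈y / h⌉ : ℝ) - 1 < y / h) hh
      rwa [div_mul_cancel₀ _ hh.ne'] at this
    · have hc : (((⌈y / h⌉ - 1).toNat : ℕ) : ℝ) = (⌈y / h⌉ : ℝ) - 1 := by
        exact_mod_cast congrArg (fun z : ℤ => (z : ℝ))
          (Int.toNat_of_nonneg (by omega : (0:ℤ) ≤ ⌈y / h⌉ - 1))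
      rw [hc, sub_add_cancel]
      exact (div_le_iff₀ hh).mp (Int.le_ceil _)
  · rintro ⟨n, hn1, _⟩
    exact lt_of_le_of_lt (by positivity) hn1

lemma key_int (H : ℝ) {h : ℝ} (hh : 0 < h)
    (hint : IntegrableOn (fun y => fH H ((⌈y / h⌉ : ℝ) * h)) (Ioi 0)) :
    ∫ y in Ioi (0:ℝ), fH H ((⌈y / h⌉ : ℝ) * h)
      = ∑' n : ℕ, fH H (((n:ℝ) + 1) * h) * h := by
  have hdisj : Pairwise (Function.onFun Disjoint
      fun n : ℕ => Ioc ((n:ℝ) * h) (((n:ℝ) + 1) * h)) := by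
    intro i j hij
    apply Set.Ioc_disjoint_Ioc.mpr
    rcases hij.lt_or_gt with hlt | hlt
    · have hij' : ((i:ℝ) + 1) ≤ (j:ℝ) := by exact_mod_cast hlt
      calc min (((i:ℝ) + 1) * h) (((j:ℝ) + 1) * h) ≤ ((i:ℝ) + 1) * h := min_le_left _ _
        _ ≤ (j:ℝ) * h := by nlinarith
        _ ≤ max ((i:ℝ) * h) ((j:ℝ) * h) := le_max_right _ _
    · have hij' : ((j:ℝ) + 1) ≤ (i:ℝ) := by exact_mod_cast hlt
      calc min (((i:ℝ) + 1) * h) (((j:ℝ) + 1) * h) ≤ ((j:ℝ) + 1) * h := min_le_right _ _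
        _ ≤ (i:ℝ) * h := by nlinarith
        _ ≤ max ((i:ℝ) * h) ((j:ℝ) * h) := le_max_left _ _
  rw [key_union hh] at hint ⊢
  rw [integral_iUnion (fun _ => measurableSet_Ioc) hdisj hint]
  refine tsum_congr fun n => ?_
  have hcongr : ∀ y ∈ Ioc ((n:ℝ) * h) (((n:ℝ) + 1) * h),
      fH H ((⌈y / h⌉ : ℝ) * h) = fH H (((n:ℝ) + 1) * h) := by
    intro y hy
    have hceil : ⌈y / h⌉ = (n:ℤ) + 1 := by
      rw [Int.ceil_eq_iff]
      constructor
      · have hlt : (n:ℝ) < y / h := (lt_div_iff₀ hh).mpr (by linarith [hy.1])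
        push_cast
        linarith
      · have hle : y / h ≤ (n:ℝ) + 1 := (div_le_iff₀ hh).mpr (by linarith [hy.2])
        push_cast
        linarith
    rw [hceil]
    push_cast
    ring_nf
  rw [setIntegral_congr_fun measurableSet_Ioc hcongr, setIntegral_const,
    Real.volume_real_Ioc_of_le (mul_le_mul_of_nonneg_right (by linarith) hh.le),
    show ((n:ℝ) + 1) * h - (n:ℝ) * h = h by ring, smul_eq_mul,
    mul_comm]

lemma key_lim (H : ℝ) (h0 : 0 < H) (h1 : H < 1/2) {y : ℝ} (hy : 0 < y) :
    Tendsto (fun ε : ℝ => fH H ((⌈y / ε ^ (1 - 2*H)⁻¹⌉ : ℝ) * ε ^ (1 - 2*H)⁻¹))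
      (nhdsWithin 0 (Ioi 0)) (nhds (fH H y)) := by
  have hα : (0:ℝ) < 1 - 2*H := by linarith
  have hcont : ContinuousAt (fH H) y := by
    unfold fH
    apply ContinuousAt.div
    · exact Real.continuousAt_rpow_const y _ (Or.inl hy.ne')
    · exact ((Real.continuousAt_rpow_const y _ (Or.inl hy.ne')).add continuousAt_const).pow 2
    · have : (0:ℝ) < y ^ (1 - 2*H) := rpow_pos_of_pos hy _
      positivity
  refine hcont.tendsto.comp ?_
  have hh : Tendsto (fun ε : ℝ => ε ^ (1 - 2*H)⁻¹) (nhdsWithin 0 (Ioi 0)) (nhds 0) := by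
    have hc := (Real.continuousAt_rpow_const 0 (1 - 2*H)⁻¹
      (Or.inr (by positivity))).tendsto
    rw [Real.zero_rpow (by positivity : (0:ℝ) < (1 - 2*H)⁻¹).ne'] at hc
    exact hc.mono_left nhdsWithin_le_nhds
  refine tendsto_of_tendsto_of_tendsto_of_le_of_le' tendsto_const_nhds
    (by simpa using tendsto_const_nhds.add hh) ?_ ?_
  · filter_upwards [self_mem_nhdsWithin] with ε hε
    exact ceil_mul_le (rpow_pos_of_pos hε _)
  · filter_upwards [self_mem_nhdsWithin] with ε hε
    exact ceil_mul_lt (rpow_pos_of_pos hε _)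

/-- for `H ∈ (0,1/2)`, `J_H = ∫₀^∞ y^{1/2−3H}/(y^{1−2H}+1)² dy` is finite and
positive, and `ε^{3/2} · Σ_{n≥1} n^{H−3/2}/(ε + n^{2H−1})² → J_H` as `ε → 0⁺`. -/
theorem stmt_7 (H : ℝ) (hH : H ∈ Set.Ioo (0 : ℝ) (1/2)) :
    IntegrableOn (fun y : ℝ => y ^ (1/2 - 3*H) / (y ^ (1 - 2*H) + 1) ^ 2) (Set.Ioi 0)
    ∧ 0 < ∫ y in Set.Ioi (0:ℝ), y ^ (1/2 - 3*H) / (y ^ (1 - 2*H) + 1) ^ 2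
    ∧ Filter.Tendsto
        (fun ε : ℝ => ε ^ (3/2 : ℝ) *
          ∑' n : ℕ+, (n : ℝ) ^ (H - 3/2) / (ε + (n : ℝ) ^ (2*H - 1)) ^ 2)
        (nhdsWithin 0 (Set.Ioi 0))
        (nhds (∫ y in Set.Ioi (0:ℝ), y ^ (1/2 - 3*H) / (y ^ (1 - 2*H) + 1) ^ 2)) := by
  obtain ⟨h0, h1⟩ := hH
  refine ⟨fH_integrableOn H h0 h1, ?_, ?_⟩
  · show 0 < ∫ y in Ioi (0:ℝ), fH H y
    have hnn : 0 ≤ᵐ[volume.restrict (Ioi (0:ℝ))] fH H := by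
      rw [EventuallyLE, ae_restrict_iff' measurableSet_Ioi]
      exact ae_of_all _ fun y hy => (fH_pos H hy).le
    rw [setIntegral_pos_iff_support_of_nonneg_ae hnn (fH_integrableOn H h0 h1)]
    have hsub : Ioi (0:ℝ) ⊆ Function.support (fH H) ∩ Ioi 0 :=
      fun y hy => ⟨(fH_pos H hy).ne', hy⟩
    refine lt_of_lt_of_le ?_ (measure_mono hsub)
    rw [Real.volume_Ioi]
    exact ENNReal.zero_lt_top
  · have hIoo : Ioo (0:ℝ) 1 ∈ nhdsWithin (0:ℝ) (Ioi 0) :=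
      Ioo_mem_nhdsGT_of_mem ⟨le_refl 0, zero_lt_one⟩
    have Gmeas : ∀ ε : ℝ, Measurable
        (fun y : ℝ => fH H ((⌈y / ε ^ (1 - 2*H)⁻¹⌉ : ℝ) * ε ^ (1 - 2*H)⁻¹)) := fun ε =>
      (fH_meas H).comp ((measurable_from_top.comp ((measurable_id.div_const _).ceil)).mul_const _)
    have Gbd : ∀ ε ∈ Ioo (0:ℝ) 1, ∀ y ∈ Ioi (0:ℝ),
        ‖fH H ((⌈y / ε ^ (1 - 2*H)⁻¹⌉ : ℝ) * ε ^ (1 - 2*H)⁻¹)‖ ≤ bH H y := by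
      intro ε hε y hy
      have hh : 0 < ε ^ (1 - 2*H)⁻¹ := rpow_pos_of_pos hε.1 _
      have hh1 : ε ^ (1 - 2*H)⁻¹ ≤ 1 := Real.rpow_le_one hε.1.le hε.2.le (le_of_lt (inv_pos.mpr (by linarith)))
      have hz1 : y ≤ (⌈y / ε ^ (1 - 2*H)⁻¹⌉ : ℝ) * ε ^ (1 - 2*H)⁻¹ := ceil_mul_le hh
      have hz2 : (⌈y / ε ^ (1 - 2*H)⁻¹⌉ : ℝ) * ε ^ (1 - 2*H)⁻¹ ≤ y + 1 :=
        (ceil_mul_lt hh).trans (by linarith)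
      have hzpos : 0 < (⌈y / ε ^ (1 - 2*H)⁻¹⌉ : ℝ) * ε ^ (1 - 2*H)⁻¹ := lt_of_lt_of_le hy hz1
      rw [Real.norm_eq_abs, abs_of_nonneg (fH_pos H hzpos).le]
      exact fH_le_bH H h0 h1 hy hz1 hz2
    have hmain : Tendsto (fun ε : ℝ => ∫ y in Ioi (0:ℝ),
        fH H ((⌈y / ε ^ (1 - 2*H)⁻¹⌉ : ℝ) * ε ^ (1 - 2*H)⁻¹)) (nhdsWithin 0 (Ioi 0))
        (nhds (∫ y in Ioi (0:ℝ), fH H y)) := by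
      refine tendsto_integral_filter_of_dominated_convergence (bH H)
        (Eventually.of_forall fun ε => (Gmeas ε).aestronglyMeasurable) ?_
        ((bH_int H h0 h1).restrict) ?_
      · filter_upwards [hIoo] with ε hε
        rw [ae_restrict_iff' measurableSet_Ioi]
        exact ae_of_all _ fun y hy => Gbd ε hε y hy
      · rw [ae_restrict_iff' measurableSet_Ioi]
        exact ae_of_all _ fun y hy => key_lim H h0 h1 hy
    refine Filter.Tendsto.congr' ?_ hmain
    filter_upwards [hIoo] with ε hε
    have hh : 0 < ε ^ (1 - 2*H)⁻¹ := rpow_pos_of_pos hε.1 _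
    have hintG : IntegrableOn
        (fun y => fH H ((⌈y / ε ^ (1 - 2*H)⁻¹⌉ : ℝ) * ε ^ (1 - 2*H)⁻¹)) (Ioi 0) :=
      integrableOn_of_le_bH H h0 h1 (Gmeas ε) (Gbd ε hε)
    rw [key_int H hh hintG, ← key_sum H h0 h1 hε.1]
end
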